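/- arXiv:2109.15133 — 2 statements merged into one kernel-verified Lean document; each statement's English description precedes it below -/
import Mathlib

section
/- Assume (A1) and (A2), let h ∈ (0,h̄), and suppose 𝔠̃ · sup_{z∈𝔅} ‖DF(z)‖_op < 1. Let Γ(t;v^h) = ∫₀ᵗ DF(y_*^h(s)) v^h(s) ds and w_*^h[y_*^h] = Π_h w_*[y_*^h]. Then there exists a unique v̂^h ∈ X^h satisfying v̂^h − Π_h Γ(·;v̂^h) = y_*^h − w_*^h[y_*^h], and moreover ‖v̂^h‖_X ≤ ‖y_*^h − w_*^h[y_*^h]‖_X / (1 − 𝔠̃ · sup_{z∈𝔅} ‖DF(z)‖_op). -/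
open MeasureTheory Set
open scoped RealInnerProductSpace

noncomputable section

/-- `ℝ^d`. -/
abbrev Euc (d : ℕ) := EuclideanSpace ℝ (Fin d)

/-- `(u, u')` represents an element of `X = H¹(0,T;ℝ^d)`: `u` is absolutely continuous
(equal to the integral of its a.e. derivative `u'`) and `u' ∈ L²(0,T;ℝ^d)`. -/
def MemX {d : ℕ} (T : ℝ) (u u' : ℝ → Euc d) : Prop :=
  MemLp u' 2 (volume.restrict (Icc (0:ℝ) T)) ∧
  ∀ t ∈ Icc (0:ℝ) T, u t = u 0 + ∫ s in (0:ℝ)..t, u' s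

/-- The inner product `⟨·,·⟩_X` on `X`. -/
def innerX {d : ℕ} (T : ℝ) (u u' v v' : ℝ → Euc d) : ℝ :=
  (∫ t in (0:ℝ)..T, ⟪u' t, v' t⟫) + ⟪u 0, v 0⟫

/-- The energy norm `‖·‖_X` on `X`. -/
def normX {d : ℕ} (T : ℝ) (u u' : ℝ → Euc d) : ℝ :=
  Real.sqrt (innerX T u u' u u')

/-- The `L²(0,T;ℝ^d)` norm. -/
def L2norm {d : ℕ} (T : ℝ) (w : ℝ → Euc d) : ℝ :=
  Real.sqrt (∫ t in (0:ℝ)..T, ‖w t‖ ^ 2)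

/-- The least-squares objective `J(y; F, f, g)`. -/
def Jfun {d : ℕ} (T : ℝ) (F : Euc d → Euc d) (f : ℝ → Euc d) (g : Euc d)
    (y y' : ℝ → Euc d) : ℝ :=
  (1/2) * (∫ t in (0:ℝ)..T, ‖y' t - F (y t) - f t‖ ^ 2) + (1/2) * ‖y 0 - g‖ ^ 2

/-- A partition `0 = τ₀ < τ₁ < ⋯ < τ_N = T` of `[0,T]`. -/
structure TPartition (T : ℝ) where
  N : ℕ
  τ : ℕ → ℝ
  hN : 0 < N
  left : τ 0 = 0
  right : τ N = T
  mono : ∀ i < N, τ i < τ (i + 1)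

/-- The mesh size `h = max_i (τ_{i+1} - τ_i)` of a partition. -/
def TPartition.mesh {T : ℝ} (P : TPartition T) : ℝ :=
  (Finset.range P.N).sup' (Finset.nonempty_range_iff.mpr P.hN.ne') fun i => P.τ (i + 1) - P.τ i

/-- `v` is (on `[0,T]`) piecewise affine w.r.t. the partition `P`,
i.e. `v` belongs to the piecewise linear finite element space `X^h`. -/
def PWLinear {d : ℕ} {T : ℝ} (P : TPartition T) (v : ℝ → Euc d) : Prop :=
  ∀ i < P.N, ∃ a b : Euc d, ∀ t ∈ Icc (P.τ i) (P.τ (i + 1)), v t = a + t • b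

/-- `(p, p')` is the orthogonal projection `Π_h (u,u')` of `(u, u') ∈ X` onto the piecewise
linear finite element space `X^h` attached to the partition `P`. -/
def IsProjX {d : ℕ} {T : ℝ} (P : TPartition T) (u u' p p' : ℝ → Euc d) : Prop :=
  MemX T p p' ∧ PWLinear P p ∧
  ∀ v v' : ℝ → Euc d, MemX T v v' → PWLinear P v →
    innerX T (fun t => u t - p t) (fun t => u' t - p' t) v v' = 0

/-- `(y, y')` is a strong solution of the IVP `y' = F(y) + f(t)`, `y(0) = g`. -/
def IsStrongSol {d : ℕ} (T : ℝ) (F : Euc d → Euc d) (f : ℝ → Euc d) (g : Euc d)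
    (y y' : ℝ → Euc d) : Prop :=
  MemX T y y' ∧ y 0 = g ∧ ∀ᵐ t ∂(volume.restrict (Ioc (0:ℝ) T)), y' t = F (y t) + f t

/-- `(y, y')` is an lsfem solution: a global minimizer of `J(·;F,f,g)` over `X^h`. -/
def IsLSFEMSol {d : ℕ} (T : ℝ) (F : Euc d → Euc d) (f : ℝ → Euc d) (g : Euc d)
    (P : TPartition T) (y y' : ℝ → Euc d) : Prop :=
  MemX T y y' ∧ PWLinear P y ∧
  ∀ z z' : ℝ → Euc d, MemX T z z' → PWLinear P z →
    Jfun T F f g y y' ≤ Jfun T F f g z z'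

/-- `c` is the smallest constant with `max_{t∈[0,T]} ‖u(t)‖ ≤ c ‖u‖_X` for all `u ∈ X`. -/
def IsEmbC (d : ℕ) (T : ℝ) (c : ℝ) : Prop :=
  IsLeast {a : ℝ | ∀ u u' : ℝ → Euc d, MemX T u u' →
    ∀ t ∈ Icc (0:ℝ) T, ‖u t‖ ≤ a * normX T u u'} c

/-- `c` is the smallest constant with `‖u‖_{L²} ≤ c ‖u‖_X` for all `u ∈ X`. -/
def IsEmbL2 (d : ℕ) (T : ℝ) (c : ℝ) : Prop :=
  IsLeast {a : ℝ | ∀ u u' : ℝ → Euc d, MemX T u u' → L2norm T u ≤ a * normX T u u'} c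

/-- The smallness bound `1/√(2T² + T + c² + √((2T² + T + c²)² + 2Tc²(1+2T)))` from (A2). -/
def A2bound (T c : ℝ) : ℝ :=
  1 / Real.sqrt (2*T^2 + T + c^2 + Real.sqrt ((2*T^2 + T + c^2)^2 + 2*T*c^2*(1+2*T)))

namespace LSFEMAux

variable {d : ℕ} {T : ℝ}

lemma _root_.TPartition.tau_le_tau (P : TPartition T) {i j : ℕ} (hij : i ≤ j) (hj : j ≤ P.N) :
    P.τ i ≤ P.τ j := by
  induction j with
  | zero => simpa [Nat.le_zero.mp hij]
  | succ n ih =>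
    rcases Nat.lt_or_ge i (n+1) with h | h
    · exact le_trans (ih (Nat.lt_succ_iff.mp h) (le_trans (Nat.le_succ n) hj))
        (P.mono n (Nat.lt_of_succ_le hj)).le
    · have : i = n + 1 := le_antisymm hij h
      simp [this]

lemma _root_.TPartition.tau_nonneg (P : TPartition T) {i : ℕ} (hi : i ≤ P.N) : 0 ≤ P.τ i := by
  have := P.tau_le_tau (Nat.zero_le i) hi
  simpa [P.left] using this

lemma _root_.TPartition.tau_le_T (P : TPartition T) {i : ℕ} (hi : i ≤ P.N) : P.τ i ≤ T := by
  have := P.tau_le_tau hi le_rfl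
  simpa [P.right] using this

lemma _root_.TPartition.dpos (P : TPartition T) {i : ℕ} (hi : i < P.N) : 0 < P.τ (i+1) - P.τ i :=
  sub_pos.mpr (P.mono i hi)

/-- slope of nodal data -/
def sl (P : TPartition T) (c : ℕ → Euc d) (i : ℕ) : Euc d :=
  (P.τ (i+1) - P.τ i)⁻¹ • (c (i+1) - c i)

def φf (P : TPartition T) (i : ℕ) (t : ℝ) : ℝ :=
  min (max (t - P.τ i) 0) (P.τ (i+1) - P.τ i)

/-- the piecewise linear interpolant of nodal data `c` -/
def fe (P : TPartition T) (c : ℕ → Euc d) (t : ℝ) : Euc d :=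
  c 0 + ∑ i ∈ Finset.range P.N, φf P i t • sl P c i

/-- the (piecewise constant) derivative of `fe P c` -/
def fe' (P : TPartition T) (c : ℕ → Euc d) (t : ℝ) : Euc d :=
  ∑ i ∈ Finset.range P.N, (Ioc (P.τ i) (P.τ (i+1))).indicator (fun _ => sl P c i) t

/-- the squared energy norm in nodal coordinates -/
def Qf (P : TPartition T) (c : ℕ → Euc d) : ℝ :=
  ∑ i ∈ Finset.range P.N, (P.τ (i+1) - P.τ i) * ‖sl P c i‖^2 + ‖c 0‖^2

lemma sl_congr (P : TPartition T) {c e : ℕ → Euc d} (h : ∀ j ≤ P.N, c j = e j) {i : ℕ}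
    (hi : i < P.N) : sl P c i = sl P e i := by
  unfold sl; rw [h i hi.le, h (i+1) hi]

lemma sl_sub (P : TPartition T) (c e : ℕ → Euc d) (i : ℕ) :
    sl P (fun j => c j - e j) i = sl P c i - sl P e i := by
  unfold sl; rw [← smul_sub]; congr 1; exact sub_sub_sub_comm _ _ _ _

lemma sl_add (P : TPartition T) (c e : ℕ → Euc d) (i : ℕ) :
    sl P (fun j => c j + e j) i = sl P c i + sl P e i := by
  unfold sl; rw [← smul_add]; congr 1; exact add_sub_add_comm _ _ _ _

lemma sl_smul (P : TPartition T) (r : ℝ) (c : ℕ → Euc d) (i : ℕ) :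
    sl P (fun j => r • c j) i = r • sl P c i := by
  unfold sl; rw [smul_comm, ← smul_sub]

lemma fe_congr (P : TPartition T) {c e : ℕ → Euc d} (h : ∀ j ≤ P.N, c j = e j) (t : ℝ) :
    fe P c t = fe P e t := by
  unfold fe
  rw [h 0 (Nat.zero_le _)]
  congr 1
  exact Finset.sum_congr rfl fun i hi => by
    rw [sl_congr P h (Finset.mem_range.mp hi)]

lemma Qf_congr (P : TPartition T) {c e : ℕ → Euc d} (h : ∀ j ≤ P.N, c j = e j) :
    Qf P c = Qf P e := by
  unfold Qf
  rw [h 0 (Nat.zero_le _)]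
  congr 1
  exact Finset.sum_congr rfl fun i hi => by
    rw [sl_congr P h (Finset.mem_range.mp hi)]

lemma fe_sub (P : TPartition T) (c e : ℕ → Euc d) (t : ℝ) :
    fe P (fun j => c j - e j) t = fe P c t - fe P e t := by
  unfold fe
  simp only [sl_sub, smul_sub]
  rw [Finset.sum_sub_distrib]
  abel

lemma fe_add (P : TPartition T) (c e : ℕ → Euc d) (t : ℝ) :
    fe P (fun j => c j + e j) t = fe P c t + fe P e t := by
  unfold fe
  simp only [sl_add, smul_add]
  rw [Finset.sum_add_distrib]
  abel

lemma fe_smul (P : TPartition T) (r : ℝ) (c : ℕ → Euc d) (t : ℝ) :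
    fe P (fun j => r • c j) t = r • fe P c t := by
  unfold fe
  rw [smul_add, Finset.smul_sum]
  congr 1
  exact Finset.sum_congr rfl fun i _ => by rw [sl_smul, smul_comm]

lemma continuous_fe (P : TPartition T) (c : ℕ → Euc d) : Continuous (fe P c) := by
  unfold fe
  refine continuous_const.add (continuous_finset_sum _ fun i _ => ?_)
  exact (((continuous_id.sub continuous_const).max continuous_const).min
    continuous_const).smul continuous_const

lemma fe_piece (P : TPartition T) (c : ℕ → Euc d) {i : ℕ} (hi : i < P.N) {t : ℝ}
    (ht : t ∈ Icc (P.τ i) (P.τ (i+1))) :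
    fe P c t = c i + (t - P.τ i) • sl P c i := by
  unfold fe
  have hsum : ∑ j ∈ Finset.range P.N, φf P j t • sl P c j
      = ∑ j ∈ Finset.range (i+1), φf P j t • sl P c j := by
    refine (Finset.sum_subset (Finset.range_subset_range.mpr hi) ?_).symm
    intro j hj hj'
    have hij : i + 1 ≤ j := by
      simp only [Finset.mem_range, not_lt] at hj'; exact hj'
    have hjN : j < P.N := Finset.mem_range.mp hj
    have : t ≤ P.τ j := le_trans ht.2 (P.tau_le_tau hij hjN.le)
    have hφ : φf P j t = 0 := by
      unfold φf
      have h1 : t - P.τ j ≤ 0 := by linarith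
      rw [max_eq_right h1]
      exact min_eq_left (P.dpos hjN).le
    rw [hφ, zero_smul]
  rw [hsum, Finset.sum_range_succ]
  have hφi : φf P i t = t - P.τ i := by
    unfold φf
    rw [max_eq_left (by linarith [ht.1])]
    exact min_eq_left (by linarith [ht.2])
  have hrest : ∀ j ∈ Finset.range i, φf P j t • sl P c j = c (j+1) - c j := by
    intro j hj
    have hji : j < i := Finset.mem_range.mp hj
    have hjN : j < P.N := lt_trans hji hi
    have h1 : P.τ (j+1) ≤ P.τ i := P.tau_le_tau hji hi.le
    have h2 : P.τ j ≤ P.τ i := P.tau_le_tau hji.le hi.le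
    have hφ : φf P j t = P.τ (j+1) - P.τ j := by
      unfold φf
      rw [max_eq_left (by linarith [ht.1])]
      exact min_eq_right (by linarith [ht.1])
    rw [hφ]
    unfold sl
    rw [smul_smul, mul_inv_cancel₀ (ne_of_gt (P.dpos hjN)), one_smul]
  rw [Finset.sum_congr rfl hrest, Finset.sum_range_sub (fun j => c j), hφi]
  abel

lemma fe_node (P : TPartition T) (c : ℕ → Euc d) {j : ℕ} (hj : j ≤ P.N) :
    fe P c (P.τ j) = c j := by
  rcases Nat.lt_or_ge j P.N with h | h
  · rw [fe_piece P c h ⟨le_rfl, (P.mono j h).le⟩]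
    simp
  · have hjN : j = P.N := le_antisymm hj h
    subst hjN
    obtain ⟨n, hn⟩ : ∃ n, P.N = n + 1 := ⟨P.N - 1, (Nat.succ_pred_eq_of_pos P.hN).symm⟩
    have hnN : n < P.N := by omega
    rw [show P.τ P.N = P.τ (n+1) by rw [hn]]
    rw [fe_piece P c hnN ⟨(P.mono n hnN).le, le_rfl⟩]
    unfold sl
    rw [smul_smul, mul_inv_cancel₀ (ne_of_gt (P.dpos hnN)), one_smul, hn]
    abel

lemma fe_zero (P : TPartition T) (c : ℕ → Euc d) : fe P c 0 = c 0 := by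
  have := fe_node P c (Nat.zero_le P.N)
  rwa [P.left] at this

lemma pwlinear_fe (P : TPartition T) (c : ℕ → Euc d) : PWLinear P (fe P c) := by
  intro i hi
  exact ⟨c i - P.τ i • sl P c i, sl P c i, fun t ht => by
    rw [fe_piece P c hi ht, sub_smul]; abel⟩

lemma fe'_piece (P : TPartition T) (c : ℕ → Euc d) {i : ℕ} (hi : i < P.N) {t : ℝ}
    (ht : t ∈ Ioc (P.τ i) (P.τ (i+1))) :
    fe' P c t = sl P c i := by
  unfold fe'
  rw [Finset.sum_eq_single i]
  · exact indicator_of_mem ht _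
  · intro j hj hji
    have hjN : j < P.N := Finset.mem_range.mp hj
    refine indicator_of_notMem ?_ _
    intro hmem
    rcases Nat.lt_or_ge j i with h | h
    · have : P.τ (j+1) ≤ P.τ i := P.tau_le_tau h hi.le
      exact absurd hmem.2 (by linarith [ht.1])
    · have hij : i + 1 ≤ j := by omega
      have : P.τ (i+1) ≤ P.τ j := P.tau_le_tau hij hjN.le
      exact absurd hmem.1 (by linarith [ht.2])
  · intro h
    exact absurd (Finset.mem_range.mpr hi) h

lemma fe'_zero_of_not (P : TPartition T) (c : ℕ → Euc d) {t : ℝ}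
    (h : ∀ i < P.N, t ∉ Ioc (P.τ i) (P.τ (i+1))) : fe' P c t = 0 := by
  unfold fe'
  exact Finset.sum_eq_zero fun i hi =>
    indicator_of_notMem (h i (Finset.mem_range.mp hi)) _

end LSFEMAux

namespace LSFEMAux
section Chunk2
variable {d : ℕ} {T : ℝ}

lemma finMeasIcc (a b : ℝ) : IsFiniteMeasure (volume.restrict (Icc a b)) :=
  ⟨by rw [Measure.restrict_apply_univ]; exact measure_Icc_lt_top⟩

lemma _root_.MemX.integrableOn {u u' : ℝ → Euc d} (hu : MemX T u u') :
    IntegrableOn u' (Icc (0:ℝ) T) := by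
  haveI := finMeasIcc (0:ℝ) T
  exact hu.1.integrable one_le_two

lemma intervalIntegrable_of {u' : ℝ → Euc d} (hu' : IntegrableOn u' (Icc (0:ℝ) T))
    {a b : ℝ} (h0 : 0 ≤ a) (hb : b ≤ T) (hab : a ≤ b) :
    IntervalIntegrable u' volume a b := by
  rw [intervalIntegrable_iff, uIoc_of_le hab]
  exact hu'.mono_set (Ioc_subset_Icc_self.trans (Icc_subset_Icc h0 hb))

lemma memX_diff {u u' : ℝ → Euc d} (hu : MemX T u u') {a b : ℝ}
    (h0 : 0 ≤ a) (hab : a ≤ b) (hb : b ≤ T) :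
    ∫ s in a..b, u' s = u b - u a := by
  have hint := hu.integrableOn
  have h1 : u b = u 0 + ∫ s in (0:ℝ)..b, u' s := hu.2 b ⟨le_trans h0 hab, hb⟩
  have h2 : u a = u 0 + ∫ s in (0:ℝ)..a, u' s := hu.2 a ⟨h0, le_trans hab hb⟩
  rw [h1, h2]
  rw [← intervalIntegral.integral_interval_sub_left
    (intervalIntegrable_of hint le_rfl hb (le_trans h0 hab))
    (intervalIntegrable_of hint le_rfl (le_trans hab hb) h0)]
  abel

lemma minmax_eq (x a b : ℝ) (hab : a ≤ b) :
    max (min x b - a) 0 = min (max (x - a) 0) (b - a) := by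
  rcases le_total x a with h | h <;> rcases le_total x b with h' | h' <;>
    simp only [min_def, max_def] <;> split_ifs <;> linarith

lemma indicator_intervalIntegrable {E : Type*} [NormedAddCommGroup E] [NormedSpace ℝ E]
    (a b : ℝ) (v : E) (c e : ℝ) :
    IntervalIntegrable ((Ioc a b).indicator (fun _ => v)) volume c e := by
  refine Integrable.intervalIntegrable ?_
  rw [integrable_indicator_iff measurableSet_Ioc]
  exact integrableOn_const measure_Ioc_lt_top.ne

lemma integral_indicator_Ioc {E : Type*} [NormedAddCommGroup E] [NormedSpace ℝ E]
    [CompleteSpace E] {a b : ℝ} (h0a : 0 ≤ a) (hab : a ≤ b) (v : E)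
    {t : ℝ} (ht : 0 ≤ t) :
    ∫ s in (0:ℝ)..t, (Ioc a b).indicator (fun _ => v) s
      = (min (max (t - a) 0) (b - a)) • v := by
  rw [intervalIntegral.integral_of_le ht, setIntegral_indicator measurableSet_Ioc,
    Ioc_inter_Ioc, setIntegral_const, sup_eq_right.mpr h0a, Real.volume_real_Ioc,
    minmax_eq _ _ _ hab]

lemma integral_fe' (P : TPartition T) (c : ℕ → Euc d) {t : ℝ} (ht : 0 ≤ t) :
    ∫ s in (0:ℝ)..t, fe' P c s = ∑ i ∈ Finset.range P.N, φf P i t • sl P c i := by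
  unfold fe'
  rw [intervalIntegral.integral_finset_sum
    (fun i _ => indicator_intervalIntegrable _ _ _ _ _)]
  refine Finset.sum_congr rfl fun i hi => ?_
  have hiN : i < P.N := Finset.mem_range.mp hi
  rw [integral_indicator_Ioc (P.tau_nonneg hiN.le) (P.mono i hiN).le (sl P c i) ht]
  rfl

lemma memℒp_fe' (P : TPartition T) (c : ℕ → Euc d) (a b : ℝ) :
    MemLp (fe' P c) 2 (volume.restrict (Icc a b)) := by
  haveI := finMeasIcc a b
  refine memLp_finsetSum _ fun i _ => ?_
  exact (memLp_const _).indicator measurableSet_Ioc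

lemma integrableOn_fe' (P : TPartition T) (c : ℕ → Euc d) :
    IntegrableOn (fe' P c) (Icc (0:ℝ) T) := by
  haveI := finMeasIcc (0:ℝ) T
  exact (memℒp_fe' P c 0 T).integrable one_le_two

lemma memX_fe (P : TPartition T) (hT : 0 ≤ T) (c : ℕ → Euc d) :
    MemX T (fe P c) (fe' P c) := by
  refine ⟨memℒp_fe' P c 0 T, fun t ht => ?_⟩
  rw [integral_fe' P c ht.1, fe_zero]
  rfl

lemma memX_sub {u u' v v' : ℝ → Euc d} (hu : MemX T u u') (hv : MemX T v v') :
    MemX T (fun t => u t - v t) (fun t => u' t - v' t) := by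
  refine ⟨hu.1.sub hv.1, fun t ht => ?_⟩
  dsimp only
  rw [intervalIntegral.integral_sub
    (intervalIntegrable_of hu.integrableOn le_rfl ht.2 ht.1)
    (intervalIntegrable_of hv.integrableOn le_rfl ht.2 ht.1)]
  rw [hu.2 t ht, hv.2 t ht]
  abel

open Classical in
lemma exists_piece (P : TPartition T) {t : ℝ} (ht : t ∈ Icc (0:ℝ) T) :
    ∃ i < P.N, t ∈ Icc (P.τ i) (P.τ (i+1)) := by
  set j := Nat.findGreatest (fun i => P.τ i ≤ t) P.N with hj
  have hPj : P.τ j ≤ t := by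
    refine Nat.findGreatest_spec (P := fun i => P.τ i ≤ t) (Nat.zero_le P.N) ?_
    show P.τ 0 ≤ t
    rw [P.left]; exact ht.1
  rcases Nat.lt_or_ge j P.N with h | h
  · refine ⟨j, h, hPj, ?_⟩
    by_contra hlt
    push_neg at hlt
    exact Nat.findGreatest_is_greatest (Nat.lt_succ_self j) (by omega) hlt.le
  · have hjN : j = P.N := le_antisymm (Nat.findGreatest_le P.N) h
    have hTt : T ≤ t := by rw [hjN] at hPj; rw [← P.right]; exact hPj
    have htT : t = T := le_antisymm ht.2 hTt
    obtain ⟨n, hn⟩ : ∃ n, P.N = n + 1 := ⟨P.N - 1, (Nat.succ_pred_eq_of_pos P.hN).symm⟩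
    have hnN : n < P.N := by omega
    refine ⟨n, hnN, ?_, ?_⟩
    · exact le_trans (P.tau_le_T (by omega)) hTt
    · rw [← hn, P.right]
      exact ht.2

open Classical in
lemma exists_piece_Ioc (P : TPartition T) {t : ℝ} (ht : t ∈ Ioc (0:ℝ) T) :
    ∃ i < P.N, t ∈ Ioc (P.τ i) (P.τ (i+1)) := by
  set j := Nat.findGreatest (fun i => P.τ i < t) P.N with hj
  have hPj : P.τ j < t := by
    refine Nat.findGreatest_spec (P := fun i => P.τ i < t) (Nat.zero_le P.N) ?_
    show P.τ 0 < t
    rw [P.left]; exact ht.1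
  have hjlt : j < P.N := by
    rcases Nat.lt_or_ge j P.N with h | h
    · exact h
    · exfalso
      have hjN : j = P.N := le_antisymm (Nat.findGreatest_le P.N) h
      rw [hjN, P.right] at hPj
      exact absurd ht.2 (not_le.mpr hPj)
  refine ⟨j, hjlt, hPj, ?_⟩
  by_contra hlt
  push_neg at hlt
  exact Nat.findGreatest_is_greatest (Nat.lt_succ_self j) (by omega) hlt

lemma Ioc_eq_biUnion (P : TPartition T) :
    Ioc (0:ℝ) T = ⋃ i ∈ Finset.range P.N, Ioc (P.τ i) (P.τ (i+1)) := by
  ext t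
  simp only [mem_iUnion, Finset.mem_range, exists_prop]
  constructor
  · intro ht
    obtain ⟨i, hi, hmem⟩ := exists_piece_Ioc P ht
    exact ⟨i, hi, hmem⟩
  · rintro ⟨i, hi, hmem⟩
    exact ⟨lt_of_le_of_lt (P.tau_nonneg hi.le) hmem.1, le_trans hmem.2 (P.tau_le_T hi)⟩

lemma sl_of_affine (P : TPartition T) {v : ℝ → Euc d} {i : ℕ} (hi : i < P.N) {a b : Euc d}
    (h1 : v (P.τ i) = a + P.τ i • b) (h2 : v (P.τ (i+1)) = a + P.τ (i+1) • b) :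
    sl P (fun j => v (P.τ j)) i = b := by
  unfold sl
  simp only [h1, h2]
  have : a + P.τ (i+1) • b - (a + P.τ i • b) = (P.τ (i+1) - P.τ i) • b := by
    rw [sub_smul]; abel
  rw [this, smul_smul, inv_mul_cancel₀ (ne_of_gt (P.dpos hi)), one_smul]

lemma pw_eq_fe (P : TPartition T) {v : ℝ → Euc d} (hv : PWLinear P v) {t : ℝ}
    (ht : t ∈ Icc (0:ℝ) T) : v t = fe P (fun i => v (P.τ i)) t := by
  obtain ⟨i, hi, hmem⟩ := exists_piece P ht
  obtain ⟨a, b, hab⟩ := hv i hi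
  rw [fe_piece P _ hi hmem,
    sl_of_affine P hi (hab _ ⟨le_rfl, (P.mono i hi).le⟩) (hab _ ⟨(P.mono i hi).le, le_rfl⟩),
    hab t hmem]
  have h1 : v (P.τ i) = a + P.τ i • b := hab _ ⟨le_rfl, (P.mono i hi).le⟩
  rw [h1, sub_smul]
  abel

lemma pwlinear_sub (P : TPartition T) {u v : ℝ → Euc d} (hu : PWLinear P u)
    (hv : PWLinear P v) : PWLinear P (fun t => u t - v t) := by
  intro i hi
  obtain ⟨a, b, hab⟩ := hu i hi
  obtain ⟨a', b', hab'⟩ := hv i hi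
  refine ⟨a - a', b - b', fun t ht => ?_⟩
  dsimp only
  rw [hab t ht, hab' t ht, smul_sub]
  abel

end Chunk2
end LSFEMAux

namespace LSFEMAux
section Chunk3
variable {d : ℕ} {T : ℝ}

/-- If the primitive of an integrable function is affine on `[a,b]`, the function is a.e.
constant there (Lebesgue differentiation). -/
lemma ae_eq_const_of_integral {a b : ℝ} (hab : a < b) {w : ℝ → Euc d}
    (hw : IntegrableOn w (Ioc a b)) {v : Euc d}
    (hint : ∀ t ∈ Icc a b, ∫ s in Ioc a t, w s = (t - a) • v) :
    ∀ᵐ t ∂(volume.restrict (Ioc a b)), w t = v := by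
  set f : ℝ → Euc d := (Ioc a b).indicator w with hf
  have hfint : Integrable f volume := by
    rw [hf, integrable_indicator_iff measurableSet_Ioc]; exact hw
  have hLeb := IsUnifLocDoublingMeasure.ae_tendsto_average (μ := (volume : Measure ℝ))
    hfint.locallyIntegrable 1
  have hae1 : ∀ᵐ x ∂(volume : Measure ℝ), x ∈ Ioo a b → w x = v := by
    filter_upwards [hLeb] with x hx hxIoo
    have hx2 := hx (fun _ : ℝ => x) id Filter.tendsto_id ?_
    swap
    · filter_upwards [self_mem_nhdsWithin] with δ (hδ : δ ∈ Ioi (0:ℝ))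
      exact Metric.mem_closedBall_self (by simpa using le_of_lt hδ)
    -- the averages are eventually equal to `v`
    have hmin : 0 < min (x - a) (b - x) := by
      simp only [lt_min_iff]; exact ⟨by linarith [hxIoo.1], by linarith [hxIoo.2]⟩
    have hev : ∀ᶠ δ in nhdsWithin (0:ℝ) (Ioi 0),
        (⨍ y in Metric.closedBall x δ, f y ∂volume) = v := by
      filter_upwards [Ioo_mem_nhdsGT_of_mem ⟨le_refl (0:ℝ), hmin⟩] with δ hδ
      obtain ⟨hδ0, hδm⟩ := hδ
      have hδa : a ≤ x - δ := by
        have := lt_min_iff.mp hδm; linarith [this.1]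
      have hδb : x + δ ≤ b := by
        have := lt_min_iff.mp hδm; linarith [this.2]
      rw [Real.closedBall_eq_Icc, setAverage_eq, integral_Icc_eq_integral_Ioc]
      rw [hf, setIntegral_indicator measurableSet_Ioc,
        inter_eq_self_of_subset_left (Ioc_subset_Ioc hδa hδb)]
      have hIa : IntegrableOn w (Ioc a (x - δ)) volume :=
        hw.mono_set (Ioc_subset_Ioc le_rfl (by linarith))
      have hIb : IntegrableOn w (Ioc (x - δ) (x + δ)) volume :=
        hw.mono_set (Ioc_subset_Ioc hδa hδb)
      have hsplit := setIntegral_union (μ := volume) (f := w)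
        (Ioc_disjoint_Ioc_of_le le_rfl) measurableSet_Ioc hIa hIb
      rw [Ioc_union_Ioc_eq_Ioc hδa (by linarith : x - δ ≤ x + δ)] at hsplit
      have h3 : ∫ s in Ioc (x - δ) (x + δ), w s = (2 * δ) • v := by
        rw [hint _ ⟨by linarith, by linarith⟩, hint _ ⟨by linarith, by linarith⟩] at hsplit
        have h4 := eq_sub_of_add_eq' hsplit.symm
        rw [h4, ← sub_smul]
        congr 1; ring
      rw [h3, Real.volume_real_Icc]
      have h5 : x + δ - (x - δ) = 2 * δ := by ring
      rw [h5, max_eq_left (by linarith)]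
      rw [smul_smul, inv_mul_cancel₀ (by linarith), one_smul]
    have : Filter.Tendsto (fun _ : ℝ => v) (nhdsWithin (0:ℝ) (Ioi 0)) (nhds (f x)) :=
      Filter.Tendsto.congr' hev hx2
    have hfx : f x = v := tendsto_nhds_unique this tendsto_const_nhds
    rw [← hfx, hf, indicator_of_mem (Ioo_subset_Ioc_self hxIoo) w]
  have hbne : ∀ᵐ x ∂(volume : Measure ℝ), x ≠ b := by
    rw [ae_iff]
    have hset : {x : ℝ | ¬ x ≠ b} = {b} := by ext x; simp
    rw [hset]
    exact measure_singleton b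
  filter_upwards [ae_restrict_of_ae hae1, ae_restrict_mem measurableSet_Ioc,
    ae_restrict_of_ae hbne] with t h1 h2 h3
  exact h1 ⟨h2.1, lt_of_le_of_ne h2.2 h3⟩

/-- a.e. identification of the derivative of a piecewise linear function. -/
lemma deriv_ae (P : TPartition T) {v v' : ℝ → Euc d} (hv : MemX T v v')
    (hpv : PWLinear P v) :
    ∀ᵐ t ∂(volume.restrict (Ioc (0:ℝ) T)), v' t = fe' P (fun i => v (P.τ i)) t := by
  rw [Ioc_eq_biUnion P]
  rw [ae_restrict_biUnion_finset_iff]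
  intro i hi
  have hiN : i < P.N := Finset.mem_range.mp hi
  obtain ⟨a, b, hab⟩ := hpv i hiN
  have hsl : sl P (fun j => v (P.τ j)) i = b :=
    sl_of_affine P hiN (hab _ ⟨le_rfl, (P.mono i hiN).le⟩) (hab _ ⟨(P.mono i hiN).le, le_rfl⟩)
  have hkey : ∀ᵐ t ∂(volume.restrict (Ioc (P.τ i) (P.τ (i+1)))), v' t = b := by
    refine ae_eq_const_of_integral (P.mono i hiN)
      (hv.integrableOn.mono_set (Ioc_subset_Icc_self.trans
        (Icc_subset_Icc (P.tau_nonneg hiN.le) (P.tau_le_T hiN)))) ?_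
    intro t ht
    rw [← intervalIntegral.integral_of_le ht.1]
    rw [memX_diff hv (P.tau_nonneg hiN.le) ht.1 (le_trans ht.2 (P.tau_le_T hiN))]
    rw [hab t ht, hab _ ⟨le_rfl, (P.mono i hiN).le⟩, sub_smul]
    abel
  filter_upwards [hkey, ae_restrict_mem measurableSet_Ioc] with t h1 h2
  rw [fe'_piece P _ hiN h2, hsl]
  exact h1

end Chunk3
end LSFEMAux

namespace LSFEMAux
section Chunk4
variable {d : ℕ} {T : ℝ}

lemma inner_fe'_eq (P : TPartition T) (c e : ℕ → Euc d) (t : ℝ) :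
    ⟪fe' P c t, fe' P e t⟫
      = ∑ i ∈ Finset.range P.N,
          (Ioc (P.τ i) (P.τ (i+1))).indicator (fun _ => ⟪sl P c i, sl P e i⟫) t := by
  by_cases hex : ∃ i < P.N, t ∈ Ioc (P.τ i) (P.τ (i+1))
  · obtain ⟨i, hi, hmem⟩ := hex
    rw [fe'_piece P c hi hmem, fe'_piece P e hi hmem]
    have hsum : ∑ j ∈ Finset.range P.N,
        (Ioc (P.τ j) (P.τ (j+1))).indicator (fun _ => (⟪sl P c j, sl P e j⟫ : ℝ)) t
        = (Ioc (P.τ i) (P.τ (i+1))).indicator (fun _ => (⟪sl P c i, sl P e i⟫ : ℝ)) t := by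
      refine Finset.sum_eq_single_of_mem i (Finset.mem_range.mpr hi) ?_
      intro j hj hji
      have hjN : j < P.N := Finset.mem_range.mp hj
      refine indicator_of_notMem ?_ _
      intro hmem'
      rcases Nat.lt_or_ge j i with h | h
      · have : P.τ (j+1) ≤ P.τ i := P.tau_le_tau h hi.le
        exact absurd hmem'.2 (by push_neg; linarith [hmem.1])
      · have hij : i + 1 ≤ j := by omega
        have : P.τ (i+1) ≤ P.τ j := P.tau_le_tau hij hjN.le
        exact absurd hmem'.1 (by push_neg; linarith [hmem.2])
    rw [hsum, indicator_of_mem hmem]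
  · push_neg at hex
    rw [fe'_zero_of_not P c hex]
    rw [(Finset.sum_eq_zero fun i hi =>
      indicator_of_notMem (hex i (Finset.mem_range.mp hi)) _ : _ = (0:ℝ))]
    exact inner_zero_left _

lemma innerX_fe (P : TPartition T) (hT : 0 ≤ T) (c e : ℕ → Euc d) :
    innerX T (fe P c) (fe' P c) (fe P e) (fe' P e)
      = ∑ i ∈ Finset.range P.N, (P.τ (i+1) - P.τ i) * ⟪sl P c i, sl P e i⟫
        + ⟪c 0, e 0⟫ := by
  unfold innerX
  rw [fe_zero, fe_zero]
  congr 1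
  rw [intervalIntegral.integral_congr (g :=
    fun t => ∑ i ∈ Finset.range P.N,
      (Ioc (P.τ i) (P.τ (i+1))).indicator (fun _ => ⟪sl P c i, sl P e i⟫) t)
    (fun t _ => inner_fe'_eq P c e t)]
  rw [intervalIntegral.integral_finset_sum
    (fun i _ => indicator_intervalIntegrable _ _ _ _ _)]
  refine Finset.sum_congr rfl fun i hi => ?_
  have hiN : i < P.N := Finset.mem_range.mp hi
  rw [integral_indicator_Ioc (P.tau_nonneg hiN.le) (P.mono i hiN).le _ hT]
  have hφ : min (max (T - P.τ i) 0) (P.τ (i+1) - P.τ i) = P.τ (i+1) - P.τ i := by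
    have h1 : P.τ (i+1) ≤ T := P.tau_le_T hiN
    have h2 : 0 ≤ P.τ i := P.tau_nonneg hiN.le
    have h3 : P.τ i ≤ P.τ (i+1) := (P.mono i hiN).le
    rw [max_eq_left (by linarith)]
    exact min_eq_right (by linarith)
  rw [hφ, smul_eq_mul]

lemma Qf_nonneg (P : TPartition T) (c : ℕ → Euc d) : 0 ≤ Qf P c := by
  unfold Qf
  have h1 : (0:ℝ) ≤ ∑ i ∈ Finset.range P.N, (P.τ (i+1) - P.τ i) * ‖sl P c i‖^2 :=
    Finset.sum_nonneg fun i hi =>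
      mul_nonneg (P.dpos (Finset.mem_range.mp hi)).le (sq_nonneg _)
  positivity

lemma normX_fe (P : TPartition T) (hT : 0 ≤ T) (c : ℕ → Euc d) :
    normX T (fe P c) (fe' P c) = Real.sqrt (Qf P c) := by
  unfold normX
  congr 1
  rw [innerX_fe P hT c c]
  unfold Qf
  congr 1
  · exact Finset.sum_congr rfl fun i _ => by rw [real_inner_self_eq_norm_sq]
  · rw [real_inner_self_eq_norm_sq]

lemma Qf_eq_zero (P : TPartition T) {c : ℕ → Euc d} (h : Qf P c = 0) :
    ∀ j ≤ P.N, c j = 0 := by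
  unfold Qf at h
  have h1 : (0:ℝ) ≤ ∑ i ∈ Finset.range P.N, (P.τ (i+1) - P.τ i) * ‖sl P c i‖^2 :=
    Finset.sum_nonneg fun i hi =>
      mul_nonneg (P.dpos (Finset.mem_range.mp hi)).le (sq_nonneg _)
  have h2 : (0:ℝ) ≤ ‖c 0‖^2 := sq_nonneg _
  have hs : ∑ i ∈ Finset.range P.N, (P.τ (i+1) - P.τ i) * ‖sl P c i‖^2 = 0 := by linarith
  have hc0 : ‖c 0‖^2 = 0 := by linarith
  have hc0' : c 0 = 0 := by
    have := pow_eq_zero_iff (n := 2) (by norm_num) |>.mp hc0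
    exact norm_eq_zero.mp this
  have hsl : ∀ i < P.N, sl P c i = 0 := by
    intro i hi
    have := (Finset.sum_eq_zero_iff_of_nonneg (fun j hj =>
      mul_nonneg (P.dpos (Finset.mem_range.mp hj)).le (sq_nonneg _))).mp hs i
      (Finset.mem_range.mpr hi)
    have h3 : ‖sl P c i‖^2 = 0 := by
      rcases mul_eq_zero.mp this with h | h
      · exact absurd h (ne_of_gt (P.dpos hi))
      · exact h
    exact norm_eq_zero.mp (pow_eq_zero_iff (n := 2) (by norm_num) |>.mp h3)
  have hstep : ∀ i < P.N, c (i+1) = c i := by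
    intro i hi
    have := hsl i hi
    unfold sl at this
    have h4 : c (i+1) - c i = 0 := by
      have h5 := congrArg (fun x => (P.τ (i+1) - P.τ i) • x) this
      simpa [smul_smul, mul_inv_cancel₀ (ne_of_gt (P.dpos hi))] using h5
    rwa [sub_eq_zero] at h4
  intro j hj
  induction j with
  | zero => exact hc0'
  | succ n ih =>
    rw [hstep n (by omega)]
    exact ih (by omega)

/-- Triangle inequality for the nodal energy norm, via an isometric embedding into an `L²`
product space. -/
lemma sqrtQ_add (P : TPartition T) (c e : ℕ → Euc d) :
    Real.sqrt (Qf P (fun j => c j + e j))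
      ≤ Real.sqrt (Qf P c) + Real.sqrt (Qf P e) := by
  classical
  set Φ : (ℕ → Euc d) → PiLp 2 (fun _ : Fin (P.N + 1) => Euc d) := fun c =>
    (WithLp.equiv 2 _).symm
      (fun j : Fin (P.N + 1) => Fin.cases (c 0)
        (fun i : Fin P.N => Real.sqrt (P.τ ((i : ℕ)+1) - P.τ (i : ℕ)) • sl P c (i : ℕ)) j)
    with hΦ
  have hnorm : ∀ c : ℕ → Euc d, Qf P c = ‖Φ c‖^2 := by
    intro c
    rw [PiLp.norm_sq_eq_of_L2]
    rw [Fin.sum_univ_succ]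
    simp only [hΦ, WithLp.equiv_symm_apply, PiLp.toLp_apply, Fin.cases_zero, Fin.cases_succ]
    unfold Qf
    rw [add_comm]
    congr 1
    rw [Finset.sum_range fun i => (P.τ (i+1) - P.τ i) * ‖sl P c i‖^2]
    refine Finset.sum_congr rfl fun i _ => ?_
    rw [norm_smul]
    rw [mul_pow]
    congr 1
    rw [Real.norm_eq_abs, abs_of_nonneg (Real.sqrt_nonneg _),
      Real.sq_sqrt (P.dpos i.isLt).le]
  have hadd : Φ (fun j => c j + e j) = Φ c + Φ e := by
    refine PiLp.ext fun j => ?_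
    induction j using Fin.cases with
    | zero => simp [hΦ, WithLp.equiv_symm_apply]
    | succ i =>
      simp only [hΦ, WithLp.equiv_symm_apply, PiLp.toLp_apply, PiLp.add_apply, Fin.cases_succ]
      show _ = Real.sqrt _ • sl P c (i:ℕ) + Real.sqrt _ • sl P e (i:ℕ)
      rw [sl_add, smul_add]
  have h1 : Real.sqrt (Qf P (fun j => c j + e j)) = ‖Φ (fun j => c j + e j)‖ := by
    rw [hnorm, Real.sqrt_sq (norm_nonneg _)]
  have h2 : Real.sqrt (Qf P c) = ‖Φ c‖ := by rw [hnorm, Real.sqrt_sq (norm_nonneg _)]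
  have h3 : Real.sqrt (Qf P e) = ‖Φ e‖ := by rw [hnorm, Real.sqrt_sq (norm_nonneg _)]
  rw [h1, h2, h3, hadd]
  exact norm_add_le _ _

end Chunk4
end LSFEMAux

namespace LSFEMAux
section Chunk5
variable {d : ℕ} {T : ℝ}

/-- key computation: the `X`-inner product of an integrable `w` against a piecewise constant
`fe'` function. -/
lemma integral_inner_fe' (P : TPartition T) (hT : 0 ≤ T) {w : ℝ → Euc d}
    (hw : IntegrableOn w (Icc (0:ℝ) T)) (e : ℕ → Euc d) :
    ∫ t in (0:ℝ)..T, ⟪w t, fe' P e t⟫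
      = ∑ i ∈ Finset.range P.N, ⟪∫ t in (P.τ i)..(P.τ (i+1)), w t, sl P e i⟫ := by
  have hsub : ∀ i, i < P.N → Icc (P.τ i) (P.τ (i+1)) ⊆ Icc (0:ℝ) T := fun i hi =>
    Icc_subset_Icc (P.tau_nonneg hi.le) (P.tau_le_T hi)
  have hwi : ∀ i < P.N, IntegrableOn w (Ioc (P.τ i) (P.τ (i+1))) :=
    fun i hi => hw.mono_set (Ioc_subset_Icc_self.trans (hsub i hi))
  have hIint : ∀ k < P.N, IntervalIntegrable (fun t => (⟪w t, fe' P e t⟫ : ℝ))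
      volume (P.τ k) (P.τ (k+1)) := by
    intro k hk
    rw [intervalIntegrable_iff, uIoc_of_le (P.mono k hk).le]
    refine (((hwi k hk).inner_const (sl P e k)).congr ?_)
    filter_upwards [ae_restrict_mem measurableSet_Ioc] with t ht
    rw [fe'_piece P e hk ht]
  have hglue := intervalIntegral.sum_integral_adjacent_intervals
    (f := fun t => (⟪w t, fe' P e t⟫ : ℝ)) (μ := volume) (a := P.τ) (n := P.N) hIint
  rw [P.left, P.right] at hglue
  rw [← hglue]
  refine Finset.sum_congr rfl fun i hi => ?_
  have hiN : i < P.N := Finset.mem_range.mp hi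
  rw [intervalIntegral.integral_of_le (P.mono i hiN).le]
  rw [setIntegral_congr_fun measurableSet_Ioc
    (g := fun t => (⟪w t, sl P e i⟫ : ℝ)) (fun t ht => by rw [fe'_piece P e hiN ht])]
  rw [intervalIntegral.integral_of_le (P.mono i hiN).le]
  have h1 : ∀ t, (⟪w t, sl P e i⟫ : ℝ) = ⟪sl P e i, w t⟫ := fun t => real_inner_comm _ _
  rw [integral_congr_ae (ae_of_all _ fun t => h1 t)]
  rw [integral_inner (hwi i hiN) (sl P e i)]
  exact real_inner_comm _ _

/-- existence: the nodal interpolant is the `X`-orthogonal projection onto `X^h`. -/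
lemma isProj_interp (P : TPartition T) (hT : 0 ≤ T) {u u' : ℝ → Euc d} (hu : MemX T u u') :
    IsProjX P u u' (fe P (fun i => u (P.τ i))) (fe' P (fun i => u (P.τ i))) := by
  set c : ℕ → Euc d := fun i => u (P.τ i) with hc
  refine ⟨memX_fe P hT c, pwlinear_fe P c, ?_⟩
  intro v v' hv hpv
  unfold innerX
  set cv : ℕ → Euc d := fun i => v (P.τ i) with hcv
  have hmemsub : MemX T (fun t => u t - fe P c t) (fun t => u' t - fe' P c t) :=
    memX_sub hu (memX_fe P hT c)
  have hwint : IntegrableOn (fun t => u' t - fe' P c t) (Icc (0:ℝ) T) :=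
    hu.integrableOn.sub (integrableOn_fe' P c)
  have hstep1 : ∫ t in (0:ℝ)..T, ⟪u' t - fe' P c t, v' t⟫
      = ∫ t in (0:ℝ)..T, ⟪u' t - fe' P c t, fe' P cv t⟫ := by
    rw [intervalIntegral.integral_of_le hT, intervalIntegral.integral_of_le hT]
    refine integral_congr_ae ?_
    filter_upwards [deriv_ae P hv hpv] with t h1
    rw [h1]
  rw [hstep1, integral_inner_fe' P hT hwint cv]
  have hzero : ∀ i ∈ Finset.range P.N,
      (⟪∫ t in (P.τ i)..(P.τ (i+1)), (u' t - fe' P c t), sl P cv i⟫ : ℝ) = 0 := by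
    intro i hi
    have hiN : i < P.N := Finset.mem_range.mp hi
    rw [memX_diff hmemsub (P.tau_nonneg hiN.le) (P.mono i hiN).le (P.tau_le_T hiN)]
    have h2 : u (P.τ (i+1)) - fe P c (P.τ (i+1)) - (u (P.τ i) - fe P c (P.τ i)) = 0 := by
      rw [fe_node P c (le_of_lt hiN), fe_node P c hiN]
      simp [hc]
    rw [h2, inner_zero_left]
  rw [Finset.sum_congr rfl hzero, Finset.sum_const_zero]
  have h3 : u 0 - fe P c 0 = 0 := by
    rw [fe_zero]
    have : c 0 = u 0 := by rw [hc]; simp [P.left]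
    rw [this, sub_self]
  dsimp only
  rw [h3]
  simp

/-- uniqueness: any `X`-orthogonal projection agrees with the nodal interpolant on `[0,T]`. -/
lemma isProj_eq_interp (P : TPartition T) (hT : 0 ≤ T) {u u' p p' : ℝ → Euc d}
    (hu : MemX T u u') (hp : IsProjX P u u' p p') :
    ∀ t ∈ Icc (0:ℝ) T, p t = fe P (fun i => u (P.τ i)) t := by
  obtain ⟨hpm, hppw, horth⟩ := hp
  set D : ℕ → Euc d := fun i =>
    (u (P.τ (i+1)) - p (P.τ (i+1))) - (u (P.τ i) - p (P.τ i)) with hD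
  set e : ℕ → Euc d := fun j => (u 0 - p 0) + ∑ i ∈ Finset.range j, D i with he
  have he0 : e 0 = u 0 - p 0 := by simp [he]
  have hsle : ∀ i, sl P e i = (P.τ (i+1) - P.τ i)⁻¹ • D i := by
    intro i
    unfold sl
    congr 1
    rw [he]
    simp [Finset.sum_range_succ]
  have hmemsub : MemX T (fun t => u t - p t) (fun t => u' t - p' t) := memX_sub hu hpm
  have hwint : IntegrableOn (fun t => u' t - p' t) (Icc (0:ℝ) T) :=
    hu.integrableOn.sub hpm.integrableOn
  have horth' := horth (fe P e) (fe' P e) (memX_fe P hT e) (pwlinear_fe P e)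
  unfold innerX at horth'
  rw [integral_inner_fe' P hT hwint e] at horth'
  have hterm : ∀ i ∈ Finset.range P.N,
      (⟪∫ t in (P.τ i)..(P.τ (i+1)), (u' t - p' t), sl P e i⟫ : ℝ)
        = (P.τ (i+1) - P.τ i)⁻¹ * ‖D i‖^2 := by
    intro i hi
    have hiN : i < P.N := Finset.mem_range.mp hi
    rw [memX_diff hmemsub (P.tau_nonneg hiN.le) (P.mono i hiN).le (P.tau_le_T hiN)]
    rw [hsle i, real_inner_smul_right]
    congr 1
    exact real_inner_self_eq_norm_sq _
  rw [Finset.sum_congr rfl hterm, fe_zero, he0] at horth'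
  rw [real_inner_self_eq_norm_sq] at horth'
  have hsnn : ∀ i ∈ Finset.range P.N, (0:ℝ) ≤ (P.τ (i+1) - P.τ i)⁻¹ * ‖D i‖^2 :=
    fun i hi => mul_nonneg (inv_nonneg.mpr (P.dpos (Finset.mem_range.mp hi)).le) (sq_nonneg _)
  have hsum0 : ∑ i ∈ Finset.range P.N, (P.τ (i+1) - P.τ i)⁻¹ * ‖D i‖^2 = 0 := by
    have h2 : (0:ℝ) ≤ ‖u 0 - p 0‖^2 := sq_nonneg _
    have h1 := Finset.sum_nonneg hsnn
    linarith
  have hp0 : p 0 = u 0 := by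
    have h2 := Finset.sum_nonneg hsnn
    have : ‖u 0 - p 0‖^2 = 0 := by linarith
    have h4 := norm_eq_zero.mp (pow_eq_zero_iff (n := 2) (by norm_num) |>.mp this)
    rw [sub_eq_zero] at h4
    exact h4.symm
  have hDzero : ∀ i < P.N, D i = 0 := by
    intro i hi
    have := (Finset.sum_eq_zero_iff_of_nonneg hsnn).mp hsum0 i (Finset.mem_range.mpr hi)
    rcases mul_eq_zero.mp this with h | h
    · exact absurd h (inv_ne_zero (ne_of_gt (P.dpos hi)))
    · exact norm_eq_zero.mp (pow_eq_zero_iff (n := 2) (by norm_num) |>.mp h)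
  have hnodal : ∀ j ≤ P.N, p (P.τ j) = u (P.τ j) := by
    intro j hj
    induction j with
    | zero => rw [P.left]; exact hp0
    | succ n ih =>
      have hD0 := hDzero n (by omega)
      rw [hD] at hD0
      have h5 : u (P.τ (n+1)) - p (P.τ (n+1)) = u (P.τ n) - p (P.τ n) := by
        have := sub_eq_zero.mp hD0
        exact this
      rw [ih (by omega), sub_self] at h5
      have := sub_eq_zero.mp h5
      exact this.symm
  intro t ht
  rw [pw_eq_fe P hppw ht]
  exact fe_congr P (fun j hj => hnodal j hj) t

/-- `X`-norm of a piecewise linear function in terms of its nodal values. -/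
lemma normX_pw (P : TPartition T) (hT : 0 ≤ T) {u u' : ℝ → Euc d} (hu : MemX T u u')
    (hpu : PWLinear P u) :
    normX T u u' = Real.sqrt (Qf P (fun i => u (P.τ i))) := by
  set c : ℕ → Euc d := fun i => u (P.τ i) with hc
  rw [← normX_fe P hT c]
  unfold normX innerX
  congr 2
  · rw [intervalIntegral.integral_of_le hT, intervalIntegral.integral_of_le hT]
    refine integral_congr_ae ?_
    filter_upwards [deriv_ae P hu hpu] with t h1
    rw [h1]
  · have : fe P c 0 = u 0 := by rw [fe_zero, hc]; simp [P.left]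
    rw [this]

/-- Cauchy–Schwarz bound for the square of an integral over an interval. -/
lemma sq_integral_le {a b : ℝ} (hab : a ≤ b) {G : ℝ → Euc d}
    (hG : MemLp G 2 (volume.restrict (Ioc a b))) :
    ‖∫ t in Ioc a b, G t‖^2 ≤ (b - a) * ∫ t in Ioc a b, ‖G t‖^2 := by
  haveI : IsFiniteMeasure (volume.restrict (Ioc a b)) :=
    ⟨by rw [Measure.restrict_apply_univ]; exact measure_Ioc_lt_top⟩
  have h1 : ‖∫ t in Ioc a b, G t‖ ≤ ∫ t in Ioc a b, ‖G t‖ := norm_integral_le_integral_norm _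
  have hconj : Real.HolderConjugate 2 2 := Real.HolderConjugate.two_two
  have hHold := integral_mul_le_Lp_mul_Lq_of_nonneg (μ := volume.restrict (Ioc a b))
    hconj (f := fun t => ‖G t‖) (g := fun _ => (1:ℝ))
    (ae_of_all _ fun t => norm_nonneg _) (ae_of_all _ fun _ => zero_le_one)
    (by rw [show ENNReal.ofReal 2 = 2 by norm_num]; exact hG.norm)
    (by rw [show ENNReal.ofReal 2 = 2 by norm_num]; exact memLp_const 1)
  have h2 : ∫ t in Ioc a b, ‖G t‖ * 1 = ∫ t in Ioc a b, ‖G t‖ := by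
    refine integral_congr_ae (ae_of_all _ fun t => mul_one _)
  have h3 : ∫ t in Ioc a b, ‖G t‖ ^ (2:ℝ) = ∫ t in Ioc a b, ‖G t‖^2 := by
    refine integral_congr_ae (ae_of_all _ fun t => ?_)
    show ‖G t‖ ^ (2:ℝ) = ‖G t‖ ^ (2:ℕ)
    rw [show (2:ℝ) = ((2:ℕ):ℝ) by norm_num, Real.rpow_natCast]
  have h4 : ∫ (_ : ℝ) in Ioc a b, (1:ℝ) ^ (2:ℝ) = b - a := by
    rw [show ∫ (_ : ℝ) in Ioc a b, (1:ℝ) ^ (2:ℝ) = ∫ (_ : ℝ) in Ioc a b, (1:ℝ) by norm_num]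
    rw [setIntegral_const, smul_eq_mul, mul_one, Real.volume_real_Ioc,
      max_eq_left (by linarith)]
  rw [h2, h3, h4] at hHold
  set X := ∫ t in Ioc a b, ‖G t‖^2 with hXd
  have hX : 0 ≤ X := integral_nonneg fun t => sq_nonneg _
  have hInn : 0 ≤ ∫ t in Ioc a b, ‖G t‖ := integral_nonneg fun t => norm_nonneg _
  calc ‖∫ t in Ioc a b, G t‖^2 ≤ (∫ t in Ioc a b, ‖G t‖)^2 :=
        pow_le_pow_left₀ (norm_nonneg _) h1 2
    _ ≤ (X ^ (1/(2:ℝ)) * (b-a) ^ (1/(2:ℝ)))^2 := pow_le_pow_left₀ hInn hHold 2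
    _ = (b - a) * X := by
        rw [mul_pow, ← Real.rpow_natCast (X ^ (1/(2:ℝ))) 2,
          ← Real.rpow_natCast ((b-a) ^ (1/(2:ℝ))) 2,
          ← Real.rpow_mul hX, ← Real.rpow_mul (by linarith : (0:ℝ) ≤ b - a)]
        norm_num
        ring

end Chunk5
end LSFEMAux

namespace LSFEMAux
section Chunk6
variable {d : ℕ} {T : ℝ}

lemma normX_zero_fun (hd : d = 0) (T : ℝ) (u u' : ℝ → Euc d) : normX T u u' = 0 := by
  subst hd
  have hinner : ∀ x y : Euc 0, (⟪x, y⟫ : ℝ) = 0 := fun x y => by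
    rw [Subsingleton.elim x (0 : Euc 0)]; exact inner_zero_left y
  unfold normX innerX
  rw [show (fun t => (⟪u' t, u' t⟫ : ℝ)) = fun _ => (0:ℝ) from funext fun t => hinner _ _]
  simp [hinner]; exact Subsingleton.elim _ _

lemma const_memX (hT : 0 ≤ T) (e : Euc d) : MemX T (fun _ => e) (fun _ => (0 : Euc d)) := by
  haveI := finMeasIcc (0:ℝ) T
  refine ⟨memLp_const 0, fun t ht => ?_⟩
  simp

lemma normX_const (hT : 0 ≤ T) (e : Euc d) :
    normX T (fun _ => e) (fun _ => (0 : Euc d)) = ‖e‖ := by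
  unfold normX innerX
  have h1 : ∫ t in (0:ℝ)..T, (⟪(0:Euc d), (0:Euc d)⟫ : ℝ) = 0 := by simp
  rw [h1, zero_add, real_inner_self_eq_norm_sq, Real.sqrt_sq (norm_nonneg _)]

lemma embC_pos (hT : 0 < T) {c : ℝ} (hc : IsEmbC d T c) : 0 < c := by
  rcases Nat.eq_zero_or_pos d with hd | hd
  · exfalso
    have hmem : (c - 1) ∈ {a : ℝ | ∀ u u' : ℝ → Euc d, MemX T u u' →
        ∀ t ∈ Icc (0:ℝ) T, ‖u t‖ ≤ a * normX T u u'} := by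
      intro u u' hu t ht
      have h1 : u t = 0 := by
        subst hd; exact Subsingleton.elim _ _
      rw [h1, norm_zero, normX_zero_fun hd, mul_zero]
    have := hc.2 hmem
    linarith
  · set e : Euc d := EuclideanSpace.single (⟨0, hd⟩ : Fin d) (1:ℝ) with he
    have hnorm : ‖e‖ = 1 := by rw [he, EuclideanSpace.norm_single]; norm_num
    have hval := hc.1 (fun _ => e) (fun _ => (0 : Euc d)) (const_memX hT.le e)
      0 ⟨le_rfl, hT.le⟩
    rw [normX_const hT.le, hnorm, mul_one] at hval
    linarith

lemma embL2_pos (hT : 0 < T) {c : ℝ} (hc : IsEmbL2 d T c) : 0 < c := by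
  rcases Nat.eq_zero_or_pos d with hd | hd
  · exfalso
    have hmem : (c - 1) ∈ {a : ℝ | ∀ u u' : ℝ → Euc d, MemX T u u' →
        L2norm T u ≤ a * normX T u u'} := by
      intro u u' hu
      have h1 : L2norm T u = 0 := by
        unfold L2norm
        have h2 : (fun t => ‖u t‖^2) = fun _ => (0:ℝ) := funext fun t => by
          have : u t = 0 := by subst hd; exact Subsingleton.elim _ _
          rw [this, norm_zero]; ring
        rw [h2]
        simp
      rw [h1, normX_zero_fun hd, mul_zero]
    have := hc.2 hmem
    linarith
  · set e : Euc d := EuclideanSpace.single (⟨0, hd⟩ : Fin d) (1:ℝ) with he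
    have hnorm : ‖e‖ = 1 := by rw [he, EuclideanSpace.norm_single]; norm_num
    have hval := hc.1 (fun _ => e) (fun _ => (0 : Euc d)) (const_memX hT.le e)
    rw [normX_const hT.le, hnorm, mul_one] at hval
    have hL2 : L2norm T (fun _ => e) = Real.sqrt T := by
      unfold L2norm
      rw [show (fun t => ‖e‖^2) = fun _ => (1:ℝ) from funext fun t => by rw [hnorm]; ring]
      rw [intervalIntegral.integral_const, smul_eq_mul, sub_zero, mul_one]
    rw [hL2] at hval
    have : 0 < Real.sqrt T := Real.sqrt_pos.mpr hT
    linarith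

end Chunk6
end LSFEMAux

set_option maxHeartbeats 4000000 in
/-- Lemma 3.5: under (A1), (A2) and `𝔠̃ · sup_{z∈𝔅} ‖DF(z)‖_op < 1`, there is a unique
`v̂^h ∈ X^h` with `v̂^h − Π_h Γ(·;v̂^h) = y_*^h − w_*^h[y_*^h]`, and it satisfies
`‖v̂^h‖_X ≤ ‖y_*^h − w_*^h[y_*^h]‖_X / (1 − 𝔠̃ · sup_{z∈𝔅} ‖DF(z)‖_op)`. -/
theorem lsfem_fixed_point_lemma
    {d : ℕ} {T : ℝ} (hT : 0 < T)
    (F : Euc d → Euc d) (f f' : ℝ → Euc d) (g : Euc d)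
    (𝔠 𝔠t : ℝ) (hc : IsEmbC d T 𝔠) (hct : IsEmbL2 d T 𝔠t)
    -- (A1)
    (hf : MemX T f f') (hF : ContDiff ℝ 3 F)
    (y y' : ℝ → Euc d) (hy : IsStrongSol T F f g y y')
    (hyuniq : ∀ z z' : ℝ → Euc d, IsStrongSol T F f g z z' → ∀ t ∈ Icc (0:ℝ) T, z t = y t)
    -- (A2)
    (hDFy : sSup ((fun t => ‖fderiv ℝ F (y t)‖) '' Icc (0:ℝ) T) < A2bound T 𝔠t)
    (r : ℝ) (hr : 0 < r)
    (B : Set (Euc d)) (hB : B = {p : Euc d | ∃ t ∈ Icc (0:ℝ) T, ‖p - y t‖ < 𝔠 * r})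
    (hbar : ℝ) (hhbar : 0 < hbar)
    (hbar_spec : ∀ P : TPartition T, P.mesh < hbar →
      ∃ yh yh' : ℝ → Euc d,
        (IsLSFEMSol T F f g P yh yh' ∧
          normX T (fun t => yh t - y t) (fun t => yh' t - y' t) < r) ∧
        ∀ zh zh' : ℝ → Euc d, IsLSFEMSol T F f g P zh zh' →
          normX T (fun t => zh t - y t) (fun t => zh' t - y' t) < r →
          ∀ t ∈ Icc (0:ℝ) T, zh t = yh t)
    (hLip : ∃ L : ℝ, 0 ≤ L ∧ (∀ p ∈ B, ∀ q ∈ B, ‖F p - F q‖ ≤ L * ‖p - q‖) ∧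
      L * T / Real.sqrt 2 < 1)
    (hDFB : sSup ((fun z => ‖fderiv ℝ F z‖) '' B) < 1 / 𝔠t)
    (hsmall : 𝔠t * sSup ((fun z => ‖fderiv ℝ F z‖) '' B) < 1) :
    ∀ P : TPartition T, P.mesh < hbar →
      ∀ yh yh' : ℝ → Euc d, IsLSFEMSol T F f g P yh yh' →
        normX T (fun t => yh t - y t) (fun t => yh' t - y' t) < r →
        ∀ wh wh' : ℝ → Euc d,
          IsProjX P (fun t => g + ∫ s in (0:ℝ)..t, (F (yh s) + f s))
            (fun t => F (yh t) + f t) wh wh' →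
          ∃ vh vh' : ℝ → Euc d,
            (MemX T vh vh' ∧ PWLinear P vh ∧
              ∀ pΓ pΓ' : ℝ → Euc d,
                IsProjX P (fun t => ∫ s in (0:ℝ)..t, fderiv ℝ F (yh s) (vh s))
                  (fun t => fderiv ℝ F (yh t) (vh t)) pΓ pΓ' →
                ∀ t ∈ Icc (0:ℝ) T, vh t - pΓ t = yh t - wh t) ∧
            (∀ uh uh' : ℝ → Euc d,
              MemX T uh uh' → PWLinear P uh →
              (∀ pΓ pΓ' : ℝ → Euc d,
                IsProjX P (fun t => ∫ s in (0:ℝ)..t, fderiv ℝ F (yh s) (uh s))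
                  (fun t => fderiv ℝ F (yh t) (uh t)) pΓ pΓ' →
                ∀ t ∈ Icc (0:ℝ) T, uh t - pΓ t = yh t - wh t) →
              ∀ t ∈ Icc (0:ℝ) T, uh t = vh t) ∧
            normX T vh vh' ≤
              normX T (fun t => yh t - wh t) (fun t => yh' t - wh' t) /
                (1 - 𝔠t * sSup ((fun z => ‖fderiv ℝ F z‖) '' B)) := by
  intro P hmesh yh yh' hyls hynear wh wh' hwproj
  classical
  open LSFEMAux in
  have hT0 : (0:ℝ) ≤ T := hT.le
  have hc0 : 0 < 𝔠 := LSFEMAux.embC_pos hT hc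
  have hct0 : 0 < 𝔠t := LSFEMAux.embL2_pos hT hct
  set 𝔰 := sSup ((fun z => ‖fderiv ℝ F z‖) '' B) with h𝔰def
  have hymem : MemX T y y' := hy.1
  -- continuity of the exact solution on [0,T]
  have hycont : ContinuousOn y (Icc (0:ℝ) T) := by
    have hint : IntegrableOn y' (Icc (0:ℝ) T) := hymem.integrableOn
    have hprim : ContinuousOn (fun t => y 0 + ∫ s in (0:ℝ)..t, y' s) (Icc (0:ℝ) T) := by
      refine continuousOn_const.add ?_
      have h2 := intervalIntegral.continuousOn_primitive_interval
        (a := (0:ℝ)) (b := T) (μ := volume) (f := y') (by rwa [uIcc_of_le hT0])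
      rwa [uIcc_of_le hT0] at h2
    exact hprim.congr (fun t ht => hymem.2 t ht)
  -- boundedness of ‖DF‖ on B
  have hBdd : BddAbove ((fun z => ‖fderiv ℝ F z‖) '' B) := by
    have hcompact : IsCompact (y '' Icc (0:ℝ) T) := isCompact_Icc.image_of_continuousOn hycont
    have hK : IsCompact (Metric.cthickening (𝔠 * r) (y '' Icc (0:ℝ) T)) :=
      hcompact.cthickening
    have hsubB : B ⊆ Metric.cthickening (𝔠 * r) (y '' Icc (0:ℝ) T) := by
      intro p hp
      rw [hB] at hp
      obtain ⟨t, ht, hlt⟩ := hp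
      refine Metric.mem_cthickening_of_dist_le p (y t) _ _ ⟨t, ht, rfl⟩ ?_
      rw [dist_eq_norm]
      exact hlt.le
    refine BddAbove.mono (image_mono hsubB) ?_
    exact (hK.image_of_continuousOn
      ((hF.continuous_fderiv (by norm_num)).norm.continuousOn)).bddAbove
  have hy0B : y 0 ∈ B := by
    rw [hB]
    exact ⟨0, ⟨le_rfl, hT0⟩, by rw [sub_self, norm_zero]; positivity⟩
  have h𝔰0 : 0 ≤ 𝔰 :=
    le_trans (norm_nonneg (fderiv ℝ F (y 0))) (le_csSup hBdd ⟨y 0, hy0B, rfl⟩)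
  set κ := 𝔠t * 𝔰 with hκdef
  have hκ1 : κ < 1 := hsmall
  have hκ0 : 0 ≤ κ := mul_nonneg hct0.le h𝔰0
  have hyhmem : MemX T yh yh' := hyls.1
  have hyhpw : PWLinear P yh := hyls.2.1
  have hyhB : ∀ t ∈ Icc (0:ℝ) T, yh t ∈ B := by
    intro t ht
    rw [hB]
    refine ⟨t, ht, ?_⟩
    have h1 := hc.1 (fun s => yh s - y s) (fun s => yh' s - y' s)
      (LSFEMAux.memX_sub hyhmem hymem) t ht
    calc ‖yh t - y t‖ ≤ 𝔠 * normX T (fun s => yh s - y s) (fun s => yh' s - y' s) := h1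
      _ < 𝔠 * r := mul_lt_mul_of_pos_left hynear hc0
  have hyhcont : ContinuousOn yh (Icc (0:ℝ) T) :=
    ((LSFEMAux.continuous_fe P (fun i => yh (P.τ i))).continuousOn).congr
      (fun t ht => LSFEMAux.pw_eq_fe P hyhpw ht)
  have hDFc : ContinuousOn (fun t => fderiv ℝ F (yh t)) (Icc (0:ℝ) T) :=
    (hF.continuous_fderiv (by norm_num)).comp_continuousOn hyhcont
  set Gm : (ℝ → Euc d) → ℝ → Euc d := fun v t => fderiv ℝ F (yh t) (v t) with hGmdef
  have hGmc : ∀ v : ℝ → Euc d, ContinuousOn v (Icc (0:ℝ) T) →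
      ContinuousOn (Gm v) (Icc (0:ℝ) T) := fun v hv => hDFc.clm_apply hv
  have hGmII : ∀ (v : ℝ → Euc d), ContinuousOn v (Icc (0:ℝ) T) → ∀ {a b : ℝ},
      0 ≤ a → a ≤ b → b ≤ T → IntervalIntegrable (Gm v) volume a b := by
    intro v hv a b h1 h2 h3
    refine ContinuousOn.intervalIntegrable ?_
    refine (hGmc v hv).mono ?_
    rw [uIcc_of_le h2]
    exact Icc_subset_Icc h1 h3
  have hGmbd : ∀ (v : ℝ → Euc d) (t : ℝ), t ∈ Icc (0:ℝ) T → ‖Gm v t‖ ≤ 𝔰 * ‖v t‖ := by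
    intro v t ht
    refine le_trans (ContinuousLinearMap.le_opNorm _ _) ?_
    exact mul_le_mul_of_nonneg_right (le_csSup hBdd ⟨yh t, hyhB t ht, rfl⟩) (norm_nonneg _)
  have hGmemp : ∀ v : ℝ → Euc d, ContinuousOn v (Icc (0:ℝ) T) →
      MemLp (Gm v) 2 (volume.restrict (Icc (0:ℝ) T)) := by
    intro v hv
    haveI := LSFEMAux.finMeasIcc (0:ℝ) T
    have hGc := hGmc v hv
    obtain ⟨C, hC⟩ := isCompact_Icc.exists_bound_of_continuousOn hGc
    refine MemLp.of_bound (hGc.aestronglyMeasurable measurableSet_Icc) C ?_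
    exact (ae_restrict_iff' measurableSet_Icc).mpr (ae_of_all _ fun t ht => hC t ht)
  have hΓmem : ∀ v : ℝ → Euc d, ContinuousOn v (Icc (0:ℝ) T) →
      MemX T (fun t => ∫ s in (0:ℝ)..t, Gm v s) (Gm v) := by
    intro v hv
    refine ⟨hGmemp v hv, fun t ht => ?_⟩
    dsimp only
    rw [intervalIntegral.integral_same, zero_add]
  set An : (ℕ → Euc d) → ℕ → Euc d :=
    fun c j => ∫ s in (0:ℝ)..(P.τ (min j P.N)), Gm (LSFEMAux.fe P c) s with hAndef
  have hAn_node : ∀ (c : ℕ → Euc d) {j : ℕ}, j ≤ P.N →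
      An c j = ∫ s in (0:ℝ)..(P.τ j), Gm (LSFEMAux.fe P c) s := by
    intro c j hj
    rw [hAndef]
    dsimp only
    rw [min_eq_left hj]
  have hAn0 : ∀ c : ℕ → Euc d, An c 0 = 0 := by
    intro c
    rw [hAn_node c (Nat.zero_le P.N), P.left, intervalIntegral.integral_same]
  have hvCont : ∀ c : ℕ → Euc d, ContinuousOn (LSFEMAux.fe P c) (Icc (0:ℝ) T) :=
    fun c => (LSFEMAux.continuous_fe P c).continuousOn
  -- the contraction estimate
  have hEst : ∀ c : ℕ → Euc d, Real.sqrt (LSFEMAux.Qf P (An c))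
      ≤ κ * Real.sqrt (LSFEMAux.Qf P c) := by
    intro c
    set v : ℝ → Euc d := LSFEMAux.fe P c with hvdef
    have hvc : Continuous v := LSFEMAux.continuous_fe P c
    have hGc : ContinuousOn (Gm v) (Icc (0:ℝ) T) := hGmc v hvc.continuousOn
    have hterm : ∀ i ∈ Finset.range P.N,
        (P.τ (i+1) - P.τ i) * ‖LSFEMAux.sl P (An c) i‖^2
          ≤ ∫ t in (P.τ i)..(P.τ (i+1)), ‖Gm v t‖^2 := by
      intro i hi
      have hiN : i < P.N := Finset.mem_range.mp hi
      have h0i : 0 ≤ P.τ i := P.tau_nonneg hiN.le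
      have hii : P.τ i ≤ P.τ (i+1) := (P.mono i hiN).le
      have hiT : P.τ (i+1) ≤ T := P.tau_le_T hiN
      have hΔpos : 0 < P.τ (i+1) - P.τ i := P.dpos hiN
      have hd1 : An c (i+1) - An c i = ∫ t in Ioc (P.τ i) (P.τ (i+1)), Gm v t := by
        rw [hAn_node c hiN, hAn_node c hiN.le]
        rw [intervalIntegral.integral_interval_sub_left
          (hGmII v hvc.continuousOn le_rfl (le_trans h0i hii) hiT)
          (hGmII v hvc.continuousOn le_rfl h0i (le_trans hii hiT))]
        rw [intervalIntegral.integral_of_le hii]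
      have hG2 : MemLp (Gm v) 2 (volume.restrict (Ioc (P.τ i) (P.τ (i+1)))) :=
        (hGmemp v hvc.continuousOn).mono_measure
          (Measure.restrict_mono
            (Ioc_subset_Icc_self.trans (Icc_subset_Icc h0i hiT)) le_rfl)
      have hCS := LSFEMAux.sq_integral_le hii hG2
      set X : Euc d := ∫ t in Ioc (P.τ i) (P.τ (i+1)), Gm v t with hX
      have hsl : LSFEMAux.sl P (An c) i = (P.τ (i+1) - P.τ i)⁻¹ • X := by
        unfold LSFEMAux.sl
        rw [hd1]
      rw [hsl, norm_smul, Real.norm_eq_abs, abs_of_nonneg (inv_nonneg.mpr hΔpos.le), mul_pow]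
      have heq : (P.τ (i+1) - P.τ i) * (((P.τ (i+1) - P.τ i)⁻¹)^2 * ‖X‖^2)
          = (P.τ (i+1) - P.τ i)⁻¹ * ‖X‖^2 := by
        field_simp
      rw [heq]
      have h2 := mul_le_mul_of_nonneg_left hCS (inv_nonneg.mpr hΔpos.le)
      rw [← mul_assoc, inv_mul_cancel₀ (ne_of_gt hΔpos), one_mul] at h2
      rw [intervalIntegral.integral_of_le hii]
      exact h2
    have hsum : ∑ i ∈ Finset.range P.N, ∫ t in (P.τ i)..(P.τ (i+1)), ‖Gm v t‖^2
        = ∫ t in (0:ℝ)..T, ‖Gm v t‖^2 := by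
      have hIIk : ∀ k < P.N, IntervalIntegrable (fun t => ‖Gm v t‖^2) volume
          (P.τ k) (P.τ (k+1)) := by
        intro k hk
        refine ContinuousOn.intervalIntegrable ?_
        refine (hGc.mono ?_).norm.pow 2
        rw [uIcc_of_le (P.mono k hk).le]
        exact Icc_subset_Icc (P.tau_nonneg hk.le) (P.tau_le_T hk)
      have h := intervalIntegral.sum_integral_adjacent_intervals (a := P.τ) (n := P.N)
        (f := fun t => ‖Gm v t‖^2) (μ := volume) hIIk
      rwa [P.left, P.right] at h
    have hmono : ∫ t in (0:ℝ)..T, ‖Gm v t‖^2 ≤ ∫ t in (0:ℝ)..T, 𝔰^2 * ‖v t‖^2 := by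
      refine intervalIntegral.integral_mono_on hT0 ?_ ?_ ?_
      · refine ContinuousOn.intervalIntegrable ?_
        refine (hGc.mono ?_).norm.pow 2
        rw [uIcc_of_le hT0]
      · exact (continuous_const.mul (hvc.norm.pow 2)).intervalIntegrable _ _
      · intro t ht
        have h1 : ‖Gm v t‖ ≤ 𝔰 * ‖v t‖ := hGmbd v t ht
        calc ‖Gm v t‖^2 ≤ (𝔰 * ‖v t‖)^2 := pow_le_pow_left₀ (norm_nonneg _) h1 2
          _ = 𝔰^2 * ‖v t‖^2 := by ring
    have hL2 : ∫ t in (0:ℝ)..T, 𝔰^2 * ‖v t‖^2 = 𝔰^2 * (L2norm T v)^2 := by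
      rw [intervalIntegral.integral_const_mul]
      congr 1
      unfold L2norm
      rw [Real.sq_sqrt (intervalIntegral.integral_nonneg hT0 (fun t _ => sq_nonneg _))]
    have hctv := hct.1 v (LSFEMAux.fe' P c) (LSFEMAux.memX_fe P hT0 c)
    have hnx : normX T v (LSFEMAux.fe' P c) = Real.sqrt (LSFEMAux.Qf P c) :=
      LSFEMAux.normX_fe P hT0 c
    have hL2b : (L2norm T v)^2 ≤ 𝔠t^2 * LSFEMAux.Qf P c := by
      have h2 := pow_le_pow_left₀ (Real.sqrt_nonneg _) hctv 2
      rw [mul_pow, hnx, Real.sq_sqrt (LSFEMAux.Qf_nonneg P c)] at h2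
      exact h2
    have hQA : LSFEMAux.Qf P (An c) ≤ κ^2 * LSFEMAux.Qf P c := by
      have hfin : LSFEMAux.Qf P (An c)
          = ∑ i ∈ Finset.range P.N, (P.τ (i+1) - P.τ i) * ‖LSFEMAux.sl P (An c) i‖^2 := by
        unfold LSFEMAux.Qf
        rw [hAn0 c, norm_zero]
        ring
      calc LSFEMAux.Qf P (An c)
          = ∑ i ∈ Finset.range P.N, (P.τ (i+1) - P.τ i) * ‖LSFEMAux.sl P (An c) i‖^2 := hfin
        _ ≤ ∑ i ∈ Finset.range P.N, ∫ t in (P.τ i)..(P.τ (i+1)), ‖Gm v t‖^2 :=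
            Finset.sum_le_sum hterm
        _ = ∫ t in (0:ℝ)..T, ‖Gm v t‖^2 := hsum
        _ ≤ ∫ t in (0:ℝ)..T, 𝔰^2 * ‖v t‖^2 := hmono
        _ = 𝔰^2 * (L2norm T v)^2 := hL2
        _ ≤ 𝔰^2 * (𝔠t^2 * LSFEMAux.Qf P c) := mul_le_mul_of_nonneg_left hL2b (sq_nonneg _)
        _ = κ^2 * LSFEMAux.Qf P c := by rw [hκdef]; ring
    calc Real.sqrt (LSFEMAux.Qf P (An c)) ≤ Real.sqrt (κ^2 * LSFEMAux.Qf P c) :=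
        Real.sqrt_le_sqrt hQA
      _ = κ * Real.sqrt (LSFEMAux.Qf P c) := by
          rw [Real.sqrt_mul (sq_nonneg κ), Real.sqrt_sq hκ0]
  -- linearity of the discrete operator
  have hAn_sub : ∀ (c e : ℕ → Euc d) (j : ℕ),
      An (fun n => c n - e n) j = An c j - An e j := by
    intro c e j
    rw [hAndef]
    dsimp only
    have hj : min j P.N ≤ P.N := min_le_right _ _
    have h0 : 0 ≤ P.τ (min j P.N) := P.tau_nonneg hj
    have hTj : P.τ (min j P.N) ≤ T := P.tau_le_T hj
    have hptw : (fun s => Gm (LSFEMAux.fe P (fun n => c n - e n)) s)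
        = fun s => Gm (LSFEMAux.fe P c) s - Gm (LSFEMAux.fe P e) s := by
      funext s
      show fderiv ℝ F (yh s) (LSFEMAux.fe P (fun n => c n - e n) s) = _
      rw [LSFEMAux.fe_sub, map_sub]
    rw [show Gm (LSFEMAux.fe P (fun n => c n - e n))
      = fun s => Gm (LSFEMAux.fe P c) s - Gm (LSFEMAux.fe P e) s from hptw]
    exact intervalIntegral.integral_sub (hGmII _ (hvCont c) le_rfl h0 hTj)
      (hGmII _ (hvCont e) le_rfl h0 hTj)
  have hAn_add : ∀ (c e : ℕ → Euc d) (j : ℕ),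
      An (fun n => c n + e n) j = An c j + An e j := by
    intro c e j
    rw [hAndef]
    dsimp only
    have hj : min j P.N ≤ P.N := min_le_right _ _
    have h0 : 0 ≤ P.τ (min j P.N) := P.tau_nonneg hj
    have hTj : P.τ (min j P.N) ≤ T := P.tau_le_T hj
    have hptw : (fun s => Gm (LSFEMAux.fe P (fun n => c n + e n)) s)
        = fun s => Gm (LSFEMAux.fe P c) s + Gm (LSFEMAux.fe P e) s := by
      funext s
      show fderiv ℝ F (yh s) (LSFEMAux.fe P (fun n => c n + e n) s) = _
      rw [LSFEMAux.fe_add, map_add]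
    rw [show Gm (LSFEMAux.fe P (fun n => c n + e n))
      = fun s => Gm (LSFEMAux.fe P c) s + Gm (LSFEMAux.fe P e) s from hptw]
    exact intervalIntegral.integral_add (hGmII _ (hvCont c) le_rfl h0 hTj)
      (hGmII _ (hvCont e) le_rfl h0 hTj)
  have hAn_smul : ∀ (a : ℝ) (c : ℕ → Euc d) (j : ℕ),
      An (fun n => a • c n) j = a • An c j := by
    intro a c j
    rw [hAndef]
    dsimp only
    have hptw : (fun s => Gm (LSFEMAux.fe P (fun n => a • c n)) s)
        = fun s => a • Gm (LSFEMAux.fe P c) s := by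
      funext s
      show fderiv ℝ F (yh s) (LSFEMAux.fe P (fun n => a • c n) s) = _
      rw [LSFEMAux.fe_smul, ContinuousLinearMap.map_smul]
    rw [show Gm (LSFEMAux.fe P (fun n => a • c n))
      = fun s => a • Gm (LSFEMAux.fe P c) s from hptw]
    exact intervalIntegral.integral_smul a _
  -- finite-dimensional inversion
  set ext : (Fin (P.N+1) → Euc d) → (ℕ → Euc d) := fun cf n =>
    if h : n < P.N + 1 then cf ⟨n, h⟩ else 0 with hextdef
  set AL : (Fin (P.N+1) → Euc d) →ₗ[ℝ] (Fin (P.N+1) → Euc d) :=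
    { toFun := fun cf j => An (ext cf) (j : ℕ)
      map_add' := by
        intro cf cg
        funext j
        have hext : ext (cf + cg) = fun n => ext cf n + ext cg n := by
          funext n
          by_cases h : n ≤ P.N <;> simp [hextdef, h]
        show An (ext (cf + cg)) (j:ℕ) = An (ext cf) (j:ℕ) + An (ext cg) (j:ℕ)
        rw [hext, hAn_add (ext cf) (ext cg) (j:ℕ)]
      map_smul' := by
        intro a cf
        funext j
        have hext : ext (a • cf) = fun n => a • ext cf n := by
          funext n
          by_cases h : n ≤ P.N <;> simp [hextdef, h]
        show An (ext (a • cf)) (j:ℕ) = a • An (ext cf) (j:ℕ)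
        rw [hext, hAn_smul a (ext cf) (j:ℕ)] } with hALdef
  have hInjSolve : ∀ cf : Fin (P.N+1) → Euc d, cf - AL cf = 0 → cf = 0 := by
    intro cf hcf
    have hfixv : ∀ j ≤ P.N, ext cf j = An (ext cf) j := by
      intro j hj
      have hj' : j < P.N + 1 := by omega
      have h1 := congrFun hcf ⟨j, hj'⟩
      rw [Pi.sub_apply, Pi.zero_apply, sub_eq_zero] at h1
      calc ext cf j = cf ⟨j, hj'⟩ := by simp [hextdef, hj]
        _ = AL cf ⟨j, hj'⟩ := h1
        _ = An (ext cf) j := rfl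
    have hQ : LSFEMAux.Qf P (ext cf) = LSFEMAux.Qf P (An (ext cf)) :=
      LSFEMAux.Qf_congr P (fun j hj => hfixv j hj)
    have h1 : Real.sqrt (LSFEMAux.Qf P (ext cf))
        ≤ κ * Real.sqrt (LSFEMAux.Qf P (ext cf)) := by
      calc Real.sqrt (LSFEMAux.Qf P (ext cf))
          = Real.sqrt (LSFEMAux.Qf P (An (ext cf))) := by rw [hQ]
        _ ≤ κ * Real.sqrt (LSFEMAux.Qf P (ext cf)) := hEst _
    have h2 : Real.sqrt (LSFEMAux.Qf P (ext cf)) = 0 := by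
      nlinarith [Real.sqrt_nonneg (LSFEMAux.Qf P (ext cf))]
    have hQ0 : LSFEMAux.Qf P (ext cf) = 0 :=
      le_antisymm (Real.sqrt_eq_zero'.mp h2) (LSFEMAux.Qf_nonneg P (ext cf))
    have hzero := LSFEMAux.Qf_eq_zero P hQ0
    funext j
    have h3 := hzero (j:ℕ) (Nat.lt_succ_iff.mp j.isLt)
    calc cf j = ext cf (j:ℕ) := by simp [hextdef, Nat.lt_succ_iff.mp j.isLt]
      _ = 0 := h3
  set TL : (Fin (P.N+1) → Euc d) →ₗ[ℝ] (Fin (P.N+1) → Euc d) :=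
    LinearMap.id - AL with hTLdef
  have hinj : Function.Injective TL := by
    intro a b hab
    have h2 : TL (a - b) = 0 := by
      rw [TL.map_sub a b, hab, sub_self]
    have h1 : (a - b) - AL (a - b) = 0 := by
      rw [hTLdef] at h2
      simpa [LinearMap.sub_apply] using h2
    have h3 := hInjSolve (a - b) h1
    exact sub_eq_zero.mp h3
  have hsurj : Function.Surjective TL :=
    LinearMap.injective_iff_surjective.mp hinj
  obtain ⟨cf, hcfeq⟩ := hsurj (fun j : Fin (P.N+1) => yh (P.τ (j:ℕ)) - wh (P.τ (j:ℕ)))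
  set c : ℕ → Euc d := ext cf with hcdef
  have hfix : ∀ j ≤ P.N, c j - An c j = yh (P.τ j) - wh (P.τ j) := by
    intro j hj
    have hj' : j < P.N + 1 := by omega
    have h1 := congrFun hcfeq ⟨j, hj'⟩
    rw [hTLdef] at h1
    simp only [LinearMap.sub_apply, LinearMap.id_apply, Pi.sub_apply] at h1
    have h2 : c j = cf ⟨j, hj'⟩ := by simp [hcdef, hextdef, hj]
    have h3 : An c j = AL cf ⟨j, hj'⟩ := rfl
    rw [h2, h3]
    exact h1
  have hwhmem : MemX T wh wh' := hwproj.1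
  have hwhpw : PWLinear P wh := hwproj.2.1
  have hsubpw : PWLinear P (fun t => yh t - wh t) := LSFEMAux.pwlinear_sub P hyhpw hwhpw
  have hsubmem : MemX T (fun t => yh t - wh t) (fun t => yh' t - wh' t) :=
    LSFEMAux.memX_sub hyhmem hwhmem
  have hvmem : MemX T (LSFEMAux.fe P c) (LSFEMAux.fe' P c) := LSFEMAux.memX_fe P hT0 c
  have hvpw : PWLinear P (LSFEMAux.fe P c) := LSFEMAux.pwlinear_fe P c
  have hvcont : ContinuousOn (LSFEMAux.fe P c) (Icc (0:ℝ) T) := hvCont c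
  have hvΓmem : MemX T (fun t => ∫ s in (0:ℝ)..t, Gm (LSFEMAux.fe P c) s)
      (Gm (LSFEMAux.fe P c)) := hΓmem _ hvcont
  refine ⟨LSFEMAux.fe P c, LSFEMAux.fe' P c, ⟨hvmem, hvpw, ?_⟩, ?_, ?_⟩
  · -- the fixed point equation
    intro pΓ pΓ' hpΓ t ht
    have hpeq := LSFEMAux.isProj_eq_interp P hT0 hvΓmem hpΓ t ht
    rw [hpeq]
    have hnod : ∀ j ≤ P.N,
        (fun i => (∫ s in (0:ℝ)..(P.τ i), Gm (LSFEMAux.fe P c) s)) j = An c j := by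
      intro j hj
      exact (hAn_node c hj).symm
    rw [LSFEMAux.fe_congr P (fun j hj => hnod j hj) t]
    have h4 : LSFEMAux.fe P c t - LSFEMAux.fe P (An c) t
        = LSFEMAux.fe P (fun j => c j - An c j) t := (LSFEMAux.fe_sub P c (An c) t).symm
    rw [h4, LSFEMAux.fe_congr P (fun j hj => hfix j hj) t,
      LSFEMAux.fe_sub P (fun j => yh (P.τ j)) (fun j => wh (P.τ j)) t,
      ← LSFEMAux.pw_eq_fe P hyhpw ht, ← LSFEMAux.pw_eq_fe P hwhpw ht]
  · -- uniqueness
    intro uh uh' huhm huhpw hprop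
    have huheq : ∀ t ∈ Icc (0:ℝ) T, uh t = LSFEMAux.fe P (fun i => uh (P.τ i)) t :=
      fun t ht => LSFEMAux.pw_eq_fe P huhpw ht
    have huhcont : ContinuousOn uh (Icc (0:ℝ) T) :=
      ((LSFEMAux.continuous_fe P _).continuousOn).congr huheq
    have hqproj := LSFEMAux.isProj_interp P hT0 (hΓmem uh huhcont)
    have hq := hprop _ _ hqproj
    set cu : ℕ → Euc d := fun i => uh (P.τ i) with hcudef
    have hAnU : ∀ j ≤ P.N, (∫ s in (0:ℝ)..(P.τ j), Gm uh s) = An cu j := by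
      intro j hj
      rw [hAn_node cu hj]
      refine intervalIntegral.integral_congr ?_
      intro s hs
      rw [uIcc_of_le (P.tau_nonneg hj)] at hs
      show fderiv ℝ F (yh s) (uh s) = fderiv ℝ F (yh s) (LSFEMAux.fe P cu s)
      rw [← huheq s ⟨hs.1, le_trans hs.2 (P.tau_le_T hj)⟩]
    have hfixu : ∀ j ≤ P.N, cu j - An cu j = yh (P.τ j) - wh (P.τ j) := by
      intro j hj
      have htj : P.τ j ∈ Icc (0:ℝ) T := ⟨P.tau_nonneg hj, P.tau_le_T hj⟩
      have h1 := hq (P.τ j) htj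
      rw [LSFEMAux.fe_node P _ hj] at h1
      rw [← hAnU j hj]
      exact h1
    set δc : ℕ → Euc d := fun n => cu n - c n with hδcdef
    have hδ : ∀ j ≤ P.N, δc j = An δc j := by
      intro j hj
      have h4 : cu j - An cu j = c j - An c j := (hfixu j hj).trans (hfix j hj).symm
      have h3 : cu j - c j = An cu j - An c j := sub_eq_sub_iff_sub_eq_sub.mp h4
      show cu j - c j = An δc j
      rw [hδcdef]
      rw [show (fun n => cu n - c n) = fun n => cu n - c n from rfl]
      rw [hAn_sub cu c j]
      exact h3
    have hQδ0 : Real.sqrt (LSFEMAux.Qf P δc) = 0 := by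
      have hQ : LSFEMAux.Qf P δc = LSFEMAux.Qf P (An δc) :=
        LSFEMAux.Qf_congr P (fun j hj => hδ j hj)
      have h1 : Real.sqrt (LSFEMAux.Qf P δc) ≤ κ * Real.sqrt (LSFEMAux.Qf P δc) := by
        calc Real.sqrt (LSFEMAux.Qf P δc) = Real.sqrt (LSFEMAux.Qf P (An δc)) := by rw [hQ]
          _ ≤ κ * Real.sqrt (LSFEMAux.Qf P δc) := hEst δc
      nlinarith [Real.sqrt_nonneg (LSFEMAux.Qf P δc)]
    have hQ0 : LSFEMAux.Qf P δc = 0 :=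
      le_antisymm (Real.sqrt_eq_zero'.mp hQδ0) (LSFEMAux.Qf_nonneg P δc)
    have hδzero := LSFEMAux.Qf_eq_zero P hQ0
    intro t ht
    rw [huheq t ht]
    refine LSFEMAux.fe_congr P (fun j hj => ?_) t
    have := hδzero j hj
    rw [hδcdef] at this
    exact sub_eq_zero.mp this
  · -- the norm bound
    have hnormv : normX T (LSFEMAux.fe P c) (LSFEMAux.fe' P c)
        = Real.sqrt (LSFEMAux.Qf P c) := LSFEMAux.normX_fe P hT0 c
    have hnormw : normX T (fun t => yh t - wh t) (fun t => yh' t - wh' t)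
        = Real.sqrt (LSFEMAux.Qf P (fun j => yh (P.τ j) - wh (P.τ j))) := by
      have := LSFEMAux.normX_pw P hT0 hsubmem hsubpw
      exact this
    have htri : Real.sqrt (LSFEMAux.Qf P c) ≤ κ * Real.sqrt (LSFEMAux.Qf P c)
        + Real.sqrt (LSFEMAux.Qf P (fun j => yh (P.τ j) - wh (P.τ j))) := by
      have h1 : LSFEMAux.Qf P c
          = LSFEMAux.Qf P (fun j => An c j + (yh (P.τ j) - wh (P.τ j))) := by
        refine LSFEMAux.Qf_congr P fun j hj => ?_
        have h2 := hfix j hj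
        rw [← h2]
        abel
      calc Real.sqrt (LSFEMAux.Qf P c)
          = Real.sqrt (LSFEMAux.Qf P (fun j => An c j + (yh (P.τ j) - wh (P.τ j)))) := by
            rw [← h1]
        _ ≤ Real.sqrt (LSFEMAux.Qf P (An c))
            + Real.sqrt (LSFEMAux.Qf P (fun j => yh (P.τ j) - wh (P.τ j))) :=
            LSFEMAux.sqrtQ_add P (An c) _
        _ ≤ κ * Real.sqrt (LSFEMAux.Qf P c)
            + Real.sqrt (LSFEMAux.Qf P (fun j => yh (P.τ j) - wh (P.τ j))) :=
            add_le_add (hEst c) le_rfl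
    rw [hnormv, hnormw]
    rw [le_div_iff₀ (by linarith : (0:ℝ) < 1 - κ)]
    nlinarith [htri]
end
end

section
/- Let F : ℝ^d → ℝ^d be C¹, f ∈ L²(0,T;ℝ^d), g ∈ ℝ^d. For u, v ∈ X define Q(u,v;f,g) = ∫₀ᵀ ⟨u'(t) − F(u(t)) − f(t), DF(u(t)) v(t)⟩ dt + ∫₀ᵀ ⟨F(u(t)) + f(t), v'(t)⟩ dt + ⟨g, v(0)⟩, and define f̃(u)(t) = −F(u(t)) − f(t) − ∫ₜᵀ [DF(u(s))]ᵀ (u'(s) − F(u(s)) − f(s)) ds and g̃(u) = −g − ∫₀ᵀ [DF(u(s))]ᵀ (u'(s) − F(u(s)) − f(s)) ds. Then for all u, v ∈ X: Q(u,v;f,g) + ∫₀ᵀ ⟨f̃(u)(t), v'(t)⟩ dt + ⟨g̃(u), v(0)⟩ = 0. -/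
open MeasureTheory Set
open scoped RealInnerProductSpace

noncomputable section

lemma memL2_inner_integrable {α : Type*} [MeasurableSpace α] {μ : Measure α} {d : ℕ}
    {f g : α → Euc d} (hf : MemLp f 2 μ) (hg : MemLp g 2 μ) :
    Integrable (fun x => ⟪f x, g x⟫) μ := by
  rw [← memLp_one_iff_integrable]
  refine ⟨hf.1.inner hg.1, ?_⟩
  calc eLpNorm (fun x => ⟪f x, g x⟫) 1 μ ≤ eLpNorm f 2 μ * eLpNorm g 2 μ := by
        haveI : ENNReal.HolderTriple 2 2 1 := ⟨by simp [ENNReal.inv_two_add_inv_two, one_div]⟩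
        simpa using eLpNorm_le_eLpNorm_mul_eLpNorm'_of_norm hf.1 hg.1 (fun a b => ⟪a, b⟫) 1
          (Filter.Eventually.of_forall fun x => by simpa using norm_inner_le_norm (𝕜 := ℝ) (f x) (g x))
    _ < ⊤ := ENNReal.mul_lt_top hf.2 hg.2

lemma fubini_triangle {d : ℕ} {T : ℝ} (q w : ℝ → Euc d)
    (hq : IntegrableOn q (Ioc (0:ℝ) T))
    (hw : IntegrableOn w (Ioc (0:ℝ) T)) :
    ∫ t in Ioc (0:ℝ) T, ⟪∫ s in Ioc t T, q s, w t⟫ =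
    ∫ s in Ioc (0:ℝ) T, ⟪q s, ∫ t in Ioc (0:ℝ) s, w t⟫ := by
  set μ := volume.restrict (Ioc (0:ℝ) T) with hμ
  set k : ℝ × ℝ → ℝ := fun p => ⟪q p.2, w p.1⟫ with hk
  set S : Set (ℝ × ℝ) := {p | p.1 < p.2} with hSdef
  have hS : MeasurableSet S := measurableSet_lt measurable_fst measurable_snd
  set H : ℝ × ℝ → ℝ := S.indicator k with hH
  have hkm : AEStronglyMeasurable k (μ.prod μ) :=
    (hq.aestronglyMeasurable.comp_quasiMeasurePreserving
        Measure.quasiMeasurePreserving_snd).inner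
      (hw.aestronglyMeasurable.comp_quasiMeasurePreserving Measure.quasiMeasurePreserving_fst)
  have hHm : AEStronglyMeasurable H (μ.prod μ) := hkm.indicator hS
  have hdom : Integrable (fun p : ℝ × ℝ => ‖w p.1‖ * ‖q p.2‖) (μ.prod μ) :=
    hw.norm.mul_prod hq.norm
  have hHi : Integrable H (μ.prod μ) := by
    refine hdom.mono' hHm (Filter.Eventually.of_forall fun p => ?_)
    by_cases hp : p ∈ S
    · rw [hH, Set.indicator_of_mem hp]
      calc ‖k p‖ ≤ ‖q p.2‖ * ‖w p.1‖ := norm_inner_le_norm _ _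
        _ = ‖w p.1‖ * ‖q p.2‖ := mul_comm _ _
    · rw [hH, Set.indicator_of_notMem hp]
      simp [mul_nonneg (norm_nonneg _) (norm_nonneg _)]
  have swap : (∫ t, (∫ s, H (t, s) ∂μ) ∂μ) = ∫ s, (∫ t, H (t, s) ∂μ) ∂μ :=
    integral_integral_swap hHi
  have hL : (∫ t, (∫ s, H (t, s) ∂μ) ∂μ) = ∫ t in Ioc (0:ℝ) T, ⟪∫ s in Ioc t T, q s, w t⟫ := by
    refine integral_congr_ae ?_
    filter_upwards [ae_restrict_mem measurableSet_Ioc] with t ht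
    have h1 : (fun s => H (t, s)) = (Ioi t).indicator (fun s => ⟪q s, w t⟫) := by
      ext s
      by_cases h : t < s
      · simp [hH, hk, Set.indicator_of_mem, h, hSdef, Set.mem_Ioi, Set.mem_setOf_eq]
      · simp [hH, hk, Set.indicator_of_notMem, h, hSdef, Set.mem_Ioi, Set.mem_setOf_eq]
    rw [h1, integral_indicator measurableSet_Ioi, hμ, Measure.restrict_restrict measurableSet_Ioi]
    have h2 : Ioi t ∩ Ioc 0 T = Ioc t T := by
      rw [Set.inter_comm, Set.Ioc_inter_Ioi, sup_eq_right.mpr ht.1.le]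
    rw [h2]
    have hqt : IntegrableOn q (Ioc t T) := hq.mono_set (Set.Ioc_subset_Ioc_left ht.1.le)
    rw [show (∫ s in Ioc t T, ⟪q s, w t⟫) = ∫ s in Ioc t T, ⟪w t, q s⟫ by
      simp_rw [real_inner_comm]]
    rw [integral_inner hqt, real_inner_comm]
  have hR : (∫ s, (∫ t, H (t, s) ∂μ) ∂μ) = ∫ s in Ioc (0:ℝ) T, ⟪q s, ∫ t in Ioc (0:ℝ) s, w t⟫ := by
    refine integral_congr_ae ?_
    filter_upwards [ae_restrict_mem measurableSet_Ioc] with s hs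
    have h1 : (fun t => H (t, s)) = (Iio s).indicator (fun t => ⟪q s, w t⟫) := by
      ext t
      by_cases h : t < s
      · simp [hH, hk, Set.indicator_of_mem, h, hSdef, Set.mem_Iio, Set.mem_setOf_eq]
      · simp [hH, hk, Set.indicator_of_notMem, h, hSdef, Set.mem_Iio, Set.mem_setOf_eq]
    rw [h1, integral_indicator measurableSet_Iio, hμ, Measure.restrict_restrict measurableSet_Iio]
    have h2 : Iio s ∩ Ioc 0 T = Ioo 0 s := by
      ext t
      simp only [Set.mem_inter_iff, Set.mem_Iio, Set.mem_Ioc, Set.mem_Ioo]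
      constructor
      · rintro ⟨h1, h2, _⟩; exact ⟨h2, h1⟩
      · rintro ⟨h1, h2⟩; exact ⟨h2, h1, le_trans h2.le hs.2⟩
    rw [h2, ← integral_Ioc_eq_integral_Ioo]
    have hws : IntegrableOn w (Ioc (0:ℝ) s) := hw.mono_set (Set.Ioc_subset_Ioc_right hs.2)
    rw [integral_inner hws]
  rw [← hL, ← hR, swap]

set_option maxHeartbeats 2000000 in
/-- Identity (Eq_G_identity): for all `u, v ∈ X`,
`Q(u,v;f,g) + ∫₀ᵀ ⟨f̃(u)(t), v'(t)⟩ dt + ⟨g̃(u), v(0)⟩ = 0`. -/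
theorem lsfem_Q_identity
    {d : ℕ} {T : ℝ} (hT : 0 < T)
    (F : Euc d → Euc d) (hF : ContDiff ℝ 1 F)
    (f : ℝ → Euc d) (hf : MemLp f 2 (volume.restrict (Icc (0:ℝ) T)))
    (g : Euc d)
    (u u' v v' : ℝ → Euc d) (hu : MemX T u u') (hv : MemX T v v') :
    ((∫ t in (0:ℝ)..T, ⟪u' t - F (u t) - f t, fderiv ℝ F (u t) (v t)⟫) +
      (∫ t in (0:ℝ)..T, ⟪F (u t) + f t, v' t⟫) + ⟪g, v 0⟫) +
    (∫ t in (0:ℝ)..T,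
      ⟪-F (u t) - f t - ∫ s in t..T,
          (ContinuousLinearMap.adjoint (fderiv ℝ F (u s))) (u' s - F (u s) - f s),
        v' t⟫) +
    ⟪-g - ∫ s in (0:ℝ)..T,
        (ContinuousLinearMap.adjoint (fderiv ℝ F (u s))) (u' s - F (u s) - f s),
      v 0⟫ = 0 := by
  have hT' : (0:ℝ) ≤ T := hT.le
  set μ := volume.restrict (Ioc (0:ℝ) T) with hμdef
  haveI hfin : IsFiniteMeasure μ :=
    ⟨by rw [hμdef, Measure.restrict_apply_univ]; exact measure_Ioc_lt_top⟩
  have hle : μ ≤ volume.restrict (Icc (0:ℝ) T) :=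
    Measure.restrict_mono Ioc_subset_Icc_self le_rfl
  have h12 : (1:ENNReal) ≤ 2 := one_le_two
  have hu'2 : MemLp u' 2 μ := hu.1.mono_measure hle
  have hv'2 : MemLp v' 2 μ := hv.1.mono_measure hle
  have hf2 : MemLp f 2 μ := hf.mono_measure hle
  have hu'i : Integrable u' μ := hu'2.integrable h12
  have hv'i : Integrable v' μ := hv'2.integrable h12
  have hfi : Integrable f μ := hf2.integrable h12
  have haeIoc : ∀ᵐ t ∂μ, t ∈ Ioc (0:ℝ) T := ae_restrict_mem measurableSet_Ioc
  -- continuity of u, v on [0,T]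
  have hu'Icc : IntegrableOn u' (Icc (0:ℝ) T) := hu.1.integrable h12
  have hv'Icc : IntegrableOn v' (Icc (0:ℝ) T) := hv.1.integrable h12
  have hcu : ContinuousOn u (Icc (0:ℝ) T) := by
    have hprim : ContinuousOn (fun x => ∫ s in (0:ℝ)..x, u' s) (Set.uIcc (0:ℝ) T) :=
      intervalIntegral.continuousOn_primitive_interval (by rwa [Set.uIcc_of_le hT'])
    rw [Set.uIcc_of_le hT'] at hprim
    exact ContinuousOn.congr (continuousOn_const.add hprim) fun t ht => hu.2 t ht
  have hcv : ContinuousOn v (Icc (0:ℝ) T) := by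
    have hprim : ContinuousOn (fun x => ∫ s in (0:ℝ)..x, v' s) (Set.uIcc (0:ℝ) T) :=
      intervalIntegral.continuousOn_primitive_interval (by rwa [Set.uIcc_of_le hT'])
    rw [Set.uIcc_of_le hT'] at hprim
    exact ContinuousOn.congr (continuousOn_const.add hprim) fun t ht => hv.2 t ht
  have hcF : Continuous F := hF.continuous
  have hcDF : Continuous (fderiv ℝ F) := hF.continuous_fderiv one_ne_zero
  set A : ℝ → Euc d →L[ℝ] Euc d :=
    fun s => ContinuousLinearMap.adjoint (fderiv ℝ F (u s)) with hAdef
  have hcA : ContinuousOn A (Icc (0:ℝ) T) :=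
    ((ContinuousLinearMap.adjoint (𝕜 := ℝ) (E := Euc d)
      (F := Euc d)).continuous.comp hcDF).comp_continuousOn hcu
  have hcFu : ContinuousOn (fun t => F (u t)) (Icc (0:ℝ) T) := hcF.comp_continuousOn hcu
  obtain ⟨C1, hC1⟩ := isCompact_Icc.exists_bound_of_continuousOn hcFu
  obtain ⟨C2, hC2⟩ := isCompact_Icc.exists_bound_of_continuousOn hcA
  obtain ⟨C4, hC4⟩ := isCompact_Icc.exists_bound_of_continuousOn hcv
  have hFum : AEStronglyMeasurable (fun t => F (u t)) μ :=
    (hcFu.mono Ioc_subset_Icc_self).aestronglyMeasurable measurableSet_Ioc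
  have hFu2 : MemLp (fun t => F (u t)) 2 μ :=
    MemLp.of_bound hFum C1 (haeIoc.mono fun t ht => hC1 t (Ioc_subset_Icc_self ht))
  have hFui : Integrable (fun t => F (u t)) μ := hFu2.integrable h12
  set w : ℝ → Euc d := fun s => u' s - F (u s) - f s with hwdef
  have hw2 : MemLp w 2 μ := (hu'2.sub hFu2).sub hf2
  have hwi : Integrable w μ := hw2.integrable h12
  set q : ℝ → Euc d := fun s => A s (w s) with hqdef
  have hAm : AEStronglyMeasurable A μ :=
    (hcA.mono Ioc_subset_Icc_self).aestronglyMeasurable measurableSet_Ioc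
  have hqm : AEStronglyMeasurable q μ := by
    have hev : Continuous (fun p : (Euc d →L[ℝ] Euc d) × Euc d => p.1 p.2) :=
      isBoundedBilinearMap_apply.continuous
    exact hev.comp_aestronglyMeasurable (hAm.prodMk hwi.aestronglyMeasurable)
  have hq2 : MemLp q 2 μ := by
    refine MemLp.of_le_mul (c := C2) hw2 hqm (haeIoc.mono fun s hs => ?_)
    calc ‖q s‖ ≤ ‖A s‖ * ‖w s‖ := (A s).le_opNorm _
      _ ≤ C2 * ‖w s‖ :=
        mul_le_mul_of_nonneg_right (hC2 s (Ioc_subset_Icc_self hs)) (norm_nonneg _)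
  have hqi : Integrable q μ := hq2.integrable h12
  set G : ℝ → Euc d := fun t => ∫ s in Ioc t T, q s with hGdef
  have hcG : ContinuousOn G (Icc (0:ℝ) T) := by
    have hqIcc : IntegrableOn q (Icc (0:ℝ) T) := by
      rw [integrableOn_Icc_iff_integrableOn_Ioc]; exact hqi
    have hprim : ContinuousOn (fun x => ∫ s in x..T, q s) (Set.uIcc (0:ℝ) T) :=
      intervalIntegral.continuousOn_primitive_interval_left (by rwa [Set.uIcc_of_le hT'])
    rw [Set.uIcc_of_le hT'] at hprim
    exact ContinuousOn.congr hprim fun t ht => (intervalIntegral.integral_of_le ht.2).symm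
  obtain ⟨C3, hC3⟩ := isCompact_Icc.exists_bound_of_continuousOn hcG
  have hGm : AEStronglyMeasurable G μ :=
    (hcG.mono Ioc_subset_Icc_self).aestronglyMeasurable measurableSet_Ioc
  have hG2 : MemLp G 2 μ :=
    MemLp.of_bound hGm C3 (haeIoc.mono fun t ht => hC3 t (Ioc_subset_Icc_self ht))
  have hvm : AEStronglyMeasurable v μ :=
    (hcv.mono Ioc_subset_Icc_self).aestronglyMeasurable measurableSet_Ioc
  have hv2 : MemLp v 2 μ :=
    MemLp.of_bound hvm C4 (haeIoc.mono fun t ht => hC4 t (Ioc_subset_Icc_self ht))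
  -- integrabilities of inner products
  have hbint : Integrable (fun t => ⟪F (u t) + f t, v' t⟫) μ :=
    memL2_inner_integrable (hFu2.add hf2) hv'2
  have hcint : Integrable (fun t => ⟪-F (u t) - f t - G t, v' t⟫) μ :=
    memL2_inner_integrable ((hFu2.neg.sub hf2).sub hG2) hv'2
  have hGv'int : Integrable (fun t => ⟪G t, v' t⟫) μ :=
    memL2_inner_integrable hG2 hv'2
  have hqvint : Integrable (fun t => ⟪q t, v t⟫) μ :=
    memL2_inner_integrable hq2 hv2
  have hqv0int : Integrable (fun t => ⟪q t, v 0⟫) μ := hqi.inner_const (v 0)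
  -- the key identity from Fubini
  have h3 : (∫ t in Ioc (0:ℝ) T, ⟪q t, v 0⟫) = ⟪G 0, v 0⟫ := by
    rw [show (∫ t in Ioc (0:ℝ) T, ⟪q t, v 0⟫) = ∫ t in Ioc (0:ℝ) T, ⟪v 0, q t⟫ by
      simp_rw [real_inner_comm]]
    rw [integral_inner hqi, real_inner_comm]
  have key : (∫ t in Ioc (0:ℝ) T, ⟪G t, v' t⟫) =
      (∫ t in Ioc (0:ℝ) T, ⟪q t, v t⟫) - ⟪G 0, v 0⟫ := by
    have h1 := fubini_triangle q v' hqi hv'i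
    have h2 : (∫ s in Ioc (0:ℝ) T, ⟪q s, ∫ t in Ioc (0:ℝ) s, v' t⟫)
        = ∫ s in Ioc (0:ℝ) T, (⟪q s, v s⟫ - ⟪q s, v 0⟫) := by
      refine integral_congr_ae (haeIoc.mono fun s hs => ?_)
      have hvv : ∫ t in Ioc (0:ℝ) s, v' t = v s - v 0 := by
        rw [← intervalIntegral.integral_of_le hs.1.le, hv.2 s ⟨hs.1.le, hs.2⟩]
        abel
      dsimp only
      rw [hvv, inner_sub_right]
    rw [h2, integral_sub hqvint hqv0int, h3] at h1
    exact h1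
  -- rewrite the goal
  simp only [intervalIntegral.integral_of_le hT']
  have e1 : (∫ t in Ioc (0:ℝ) T, ⟪u' t - F (u t) - f t, fderiv ℝ F (u t) (v t)⟫)
      = ∫ t in Ioc (0:ℝ) T, ⟪q t, v t⟫ := by
    refine integral_congr_ae (Filter.Eventually.of_forall fun t => ?_)
    exact (ContinuousLinearMap.adjoint_inner_left (fderiv ℝ F (u t)) (v t) (w t)).symm
  have e3 : (∫ t in Ioc (0:ℝ) T,
      ⟪-F (u t) - f t - ∫ s in t..T,
          (ContinuousLinearMap.adjoint (fderiv ℝ F (u s))) (u' s - F (u s) - f s), v' t⟫)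
      = ∫ t in Ioc (0:ℝ) T, ⟪-F (u t) - f t - G t, v' t⟫ := by
    refine integral_congr_ae (haeIoc.mono fun t ht => ?_)
    dsimp only
    rw [intervalIntegral.integral_of_le ht.2]
  have e4 : ⟪-g - ∫ s in Ioc (0:ℝ) T,
        (ContinuousLinearMap.adjoint (fderiv ℝ F (u s))) (u' s - F (u s) - f s), v 0⟫
      = -⟪g, v 0⟫ - ⟪G 0, v 0⟫ := by
    show ⟪-g - G 0, v 0⟫ = _
    rw [inner_sub_left, inner_neg_left]
  have e5 : (∫ t in Ioc (0:ℝ) T, ⟪F (u t) + f t, v' t⟫) +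
      (∫ t in Ioc (0:ℝ) T, ⟪-F (u t) - f t - G t, v' t⟫) =
      -(∫ t in Ioc (0:ℝ) T, ⟪G t, v' t⟫) := by
    rw [← integral_add hbint hcint, ← integral_neg]
    refine integral_congr_ae (Filter.Eventually.of_forall fun t => ?_)
    dsimp only
    rw [← inner_add_left,
      show (F (u t) + f t) + (-F (u t) - f t - G t) = -G t by abel, inner_neg_left]
  rw [e1, e3, e4]
  linarith [key, e5]
end
end
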